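/- arXiv:2510.15932 — 9 statements merged into one kernel-verified Lean document; each statement's English description precedes it below -/
import Mathlib

section
/- Let F be a field of characteristic zero and let A, B ∈ Mₙ(F). Then 𝒞(A) = 𝒞(B) if and only if A and B are polynomially equivalent. -/
open Polynomial DirectSum
open scoped DirectSum

set_option maxHeartbeats 1000000
set_option synthInstance.maxHeartbeats 200000

/-- Chinese remainder with compatible congruences for prime power moduli. -/
lemma crt_compat {R : Type*} [CommRing R] [IsDomain R] [IsPrincipalIdealRing R]
    {ι : Type*} [Fintype ι] (p : ι → R) (hp : ∀ i, Irreducible (p i)) (e : ι → ℕ) (r : ι → R)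
    (H : ∀ i j, p j ^ e j ∣ p i ^ e i → p j ^ e j ∣ r i - r j) :
    ∃ s : R, ∀ i, p i ^ e i ∣ s - r i := by
  classical
  set Q : Finset (Ideal R) := Finset.image (fun i => Ideal.span {p i}) Finset.univ with hQ
  have key : ∀ P : Q, ∃ i : ι, Ideal.span {p i} = (P : Ideal R) ∧
      ∀ j, Ideal.span {p j} = (P : Ideal R) → e j ≤ e i := by
    rintro ⟨P, hP⟩
    obtain ⟨i0, -, hi0⟩ := Finset.mem_image.mp hP
    obtain ⟨i, hi, hmax⟩ := Finset.exists_max_image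
      (Finset.univ.filter fun i => Ideal.span {p i} = P) e ⟨i0, by simp [hi0]⟩
    refine ⟨i, by simpa using (Finset.mem_filter.mp hi).2, fun j hj => hmax j (by simp [hj])⟩
  choose m hm hmax using key
  have coprime : Pairwise fun P P' : Q =>
      IsCoprime (Ideal.span {p (m P) ^ e (m P)}) (Ideal.span {p (m P') ^ e (m P')}) := by
    intro P P' hne
    rw [← Ideal.span_singleton_pow, ← Ideal.span_singleton_pow]
    refine IsCoprime.pow ?_
    rw [Ideal.isCoprime_iff_sup_eq]
    refine Ideal.IsMaximal.coprime_of_ne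
      (PrincipalIdealRing.isMaximal_of_irreducible (hp _))
      (PrincipalIdealRing.isMaximal_of_irreducible (hp _)) ?_
    rw [hm P, hm P']
    exact fun h => hne (Subtype.ext h)
  obtain ⟨s, hs⟩ := Ideal.exists_forall_sub_mem_ideal
    (I := fun P : Q => Ideal.span {p (m P) ^ e (m P)}) coprime (fun P => r (m P))
  refine ⟨s, fun i => ?_⟩
  have hPQ : Ideal.span {p i} ∈ Q := Finset.mem_image_of_mem _ (Finset.mem_univ i)
  set P : Q := ⟨Ideal.span {p i}, hPQ⟩
  have hassoc : Associated (p (m P)) (p i) :=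
    Ideal.span_singleton_eq_span_singleton.mp (hm P)
  have hle : e i ≤ e (m P) := hmax P i rfl
  have hdvd : p i ^ e i ∣ p (m P) ^ e (m P) :=
    dvd_trans (pow_dvd_pow_of_dvd hassoc.symm.dvd _) (pow_dvd_pow _ hle)
  have h1 : p i ^ e i ∣ s - r (m P) :=
    dvd_trans hdvd (Ideal.mem_span_singleton.mp (hs P))
  have h2 : p i ^ e i ∣ r (m P) - r i := H (m P) i hdvd
  have h3 := h1.add h2
  rwa [sub_add_sub_cancel] at h3

/-- A linear endomorphism of `⨁ i, R ⧸ (q i)` commuting with all endomorphisms is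
(compatible with) scalar multiplication. -/
lemma directSum_scalar_of_comm {R : Type*} [CommRing R] {ι : Type*} [Fintype ι] [DecidableEq ι]
    (q : ι → R)
    (T : (⨁ i, R ⧸ Ideal.span {q i}) →ₗ[R] ⨁ i, R ⧸ Ideal.span {q i})
    (H : ∀ h : (⨁ i, R ⧸ Ideal.span {q i}) →ₗ[R] ⨁ i, R ⧸ Ideal.span {q i},
      T ∘ₗ h = h ∘ₗ T) :
    ∃ r : ι → R, (∀ i j, q j ∣ q i → q j ∣ r i - r j) ∧
      ∀ s : R, (∀ i, q i ∣ s - r i) → ∀ x, T x = s • x := by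
  classical
  set M : ι → Type _ := fun i => R ⧸ Ideal.span {q i} with hM
  let ρ : ∀ i, M i →ₗ[R] ⨁ i, M i := fun i => DirectSum.lof R ι M i
  let π : ∀ i, (⨁ i, M i) →ₗ[R] M i := fun i => DirectSum.component R ι M i
  have factA : ∀ i x, T (ρ i x) = ρ i (π i (T (ρ i x))) := by
    intro i x
    have h := LinearMap.congr_fun (H ((ρ i) ∘ₗ (π i))) (ρ i x)
    simp only [LinearMap.comp_apply] at h
    rw [DirectSum.component.lof_self] at h
    exact h
  choose r hr using fun i =>
    Submodule.Quotient.mk_surjective (Ideal.span {q i} : Ideal R)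
      (π i (T (ρ i (Submodule.Quotient.mk 1))))
  have Tapply : ∀ i a, π i (T (ρ i (Submodule.Quotient.mk a))) =
      Submodule.Quotient.mk (a * r i) := by
    intro i a
    have h1 : (Submodule.Quotient.mk a : M i) = a • Submodule.Quotient.mk 1 := by
      rw [← Submodule.Quotient.mk_smul]
      simp
    rw [h1, map_smul, map_smul, map_smul, ← hr i, ← Submodule.Quotient.mk_smul]
    simp [smul_eq_mul]
  refine ⟨r, ?_, ?_⟩
  · intro i j hji
    have hle : Ideal.span {q i} ≤ Ideal.span {q j} :=
      Ideal.span_singleton_le_span_singleton.mpr hji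
    let φ : M i →ₗ[R] M j :=
      Submodule.mapQ _ _ LinearMap.id (fun x hx => hle hx)
    have hφ : ∀ a : R, φ (Submodule.Quotient.mk a) = Submodule.Quotient.mk a := fun a => by
      simp only [φ]
      erw [Submodule.mapQ_apply]
      rfl
    have hc := LinearMap.congr_fun (H ((ρ j) ∘ₗ φ ∘ₗ (π i)))
      (ρ i (Submodule.Quotient.mk 1))
    simp only [LinearMap.comp_apply] at hc
    rw [DirectSum.component.lof_self] at hc
    -- hc : T (ρ j (φ (mk 1))) = ρ j (φ (π i (T (ρ i (mk 1)))))
    have hc2 := congrArg (π j) hc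
    rw [DirectSum.component.lof_self] at hc2
    -- hc2 : π j (T (ρ j (φ (mk 1)))) = φ (π i (T (ρ i (mk 1))))
    rw [hφ, Tapply, Tapply, hφ, one_mul, one_mul] at hc2
    -- hc2 : mk (r j) = mk (r i) in R ⧸ span {q j}
    have := (Submodule.Quotient.eq _).mp hc2.symm
    exact Ideal.mem_span_singleton.mp this
  · intro s hs x
    induction x using DirectSum.induction_on with
    | zero => simp
    | of i b =>
      obtain ⟨a, rfl⟩ := Submodule.Quotient.mk_surjective _ b
      rw [← DirectSum.lof_eq_of R]
      rw [factA i, Tapply]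
      rw [← map_smul]
      congr 1
      rw [← Submodule.Quotient.mk_smul]
      rw [Submodule.Quotient.eq]
      rw [Ideal.mem_span_singleton]
      have hd := (hs i).mul_left a
      have heq : a * r i - s • a = -(a * (s - r i)) := by
        simp only [smul_eq_mul]; ring
      rw [heq]
      exact hd.neg_right
    | add x y hx hy =>
      rw [map_add, hx, hy, smul_add]

/-- The bicommutant of a single endomorphism of a finite-dimensional space consists of
polynomials in that endomorphism. -/
lemma bicomm {F : Type*} [Field F] {n : ℕ} (f g : Module.End F (Fin n → F))
    (H : ∀ h : Module.End F (Fin n → F), Commute f h → Commute g h) :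
    ∃ p : Polynomial F, g = Polynomial.aeval f p := by
  classical
  have hgf : Commute g f := H f (Commute.refl f)
  -- the F[X]-module structure coming from f
  have htor : Module.IsTorsion (Polynomial F) (Module.AEval' f) := by
    intro x
    refine ⟨⟨minpoly F f, mem_nonZeroDivisors_of_ne_zero
      (minpoly.ne_zero (IsIntegral.of_finite F f))⟩, ?_⟩
    obtain ⟨m, rfl⟩ := (Module.AEval'.of f).surjective x
    show (minpoly F f) • (Module.AEval'.of f m) = 0
    rw [← Module.AEval.of_aeval_smul]
    have : Polynomial.aeval f (minpoly F f) = 0 := minpoly.aeval F f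
    rw [this]
    simp
  obtain ⟨ι, hfin, p, hp, e, ⟨E⟩⟩ :=
    Module.equiv_directSum_of_isTorsion (R := Polynomial F) (M := Module.AEval' f) htor
  -- transport g to an F[X]-linear endomorphism G of AEval' f
  let G : Module.AEval' f →ₗ[Polynomial F] Module.AEval' f :=
    LinearMap.ofAEval f ((Module.AEval'.of f).toLinearMap ∘ₗ g) (fun m => by
      show Module.AEval'.of f (g (f • m)) = (Polynomial.X : Polynomial F) • Module.AEval'.of f (g m)
      rw [Module.AEval'.X_smul_of]
      congr 1
      exact LinearMap.congr_fun hgf m)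
  have hG : ∀ m, G (Module.AEval'.of f m) = Module.AEval'.of f (g m) := fun m => rfl
  let T := E.toLinearMap ∘ₗ G ∘ₗ E.symm.toLinearMap
  have hTE : ∀ x, T (E x) = E (G x) := by
    intro x
    show E (G (E.symm (E x))) = E (G x)
    rw [E.symm_apply_apply]
  have hT : ∀ h, T ∘ₗ h = h ∘ₗ T := by
    intro h
    let h0 : Module.AEval' f →ₗ[Polynomial F] Module.AEval' f :=
      E.symm.toLinearMap ∘ₗ h ∘ₗ E.toLinearMap
    let h1 : Module.End F (Fin n → F) :=
      ((Module.AEval'.of f).symm.toLinearMap ∘ₗ (LinearMap.restrictScalars F h0)) ∘ₗ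
        (Module.AEval'.of f).toLinearMap
    have hh1 : ∀ m, h1 m = (Module.AEval'.of f).symm (h0 (Module.AEval'.of f m)) :=
      fun m => rfl
    have hcomm : Commute f h1 := by
      apply LinearMap.ext
      intro m
      show f (h1 m) = h1 (f m)
      have e1 : (Module.AEval'.of f) (f m)
          = (Polynomial.X : Polynomial F) • (Module.AEval'.of f) m :=
        (Module.AEval'.X_smul_of f m).symm
      calc f (h1 m)
          = f ((Module.AEval'.of f).symm (h0 ((Module.AEval'.of f) m))) := rfl
        _ = (Module.AEval'.of f).symm
              ((Polynomial.X : Polynomial F) • h0 ((Module.AEval'.of f) m)) :=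
            (Module.AEval'.of_symm_X_smul f _).symm
        _ = (Module.AEval'.of f).symm
              (h0 ((Polynomial.X : Polynomial F) • (Module.AEval'.of f) m)) :=
            congrArg (Module.AEval'.of f).symm
              (h0.map_smul (Polynomial.X : Polynomial F) ((Module.AEval'.of f) m)).symm
        _ = (Module.AEval'.of f).symm (h0 ((Module.AEval'.of f) (f m))) := by rw [← e1]
        _ = h1 (f m) := rfl
    have hgcomm := H h1 hcomm
    have hkey : G ∘ₗ h0 = h0 ∘ₗ G := by
      apply LinearMap.ext
      intro x
      obtain ⟨m, rfl⟩ := (Module.AEval'.of f).surjective x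
      show G (h0 (Module.AEval'.of f m)) = h0 (G (Module.AEval'.of f m))
      have e1 : ∀ u : Fin n → F,
          h0 ((Module.AEval'.of f) u) = (Module.AEval'.of f) (h1 u) := fun u =>
        ((Module.AEval'.of f).apply_symm_apply (h0 ((Module.AEval'.of f) u))).symm
      calc G (h0 ((Module.AEval'.of f) m))
          = G ((Module.AEval'.of f) (h1 m)) := by rw [e1]
        _ = (Module.AEval'.of f) (g (h1 m)) := hG _
        _ = (Module.AEval'.of f) (h1 (g m)) := by
            exact congrArg _ (LinearMap.congr_fun hgcomm m)
        _ = h0 ((Module.AEval'.of f) (g m)) := (e1 (g m)).symm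
        _ = h0 (G ((Module.AEval'.of f) m)) := by rw [hG]
    apply LinearMap.ext
    intro x
    simp only [LinearMap.comp_apply]
    have e0 : h x = E (h0 (E.symm x)) := by
      show h x = E (E.symm (h (E (E.symm x))))
      rw [E.apply_symm_apply, E.apply_symm_apply]
    rw [e0]
    rw [hTE]
    have e2 : G (h0 (E.symm x)) = h0 (G (E.symm x)) := LinearMap.congr_fun hkey (E.symm x)
    rw [e2]
    show E (h0 (G (E.symm x))) = h (E (G (E.symm x)))
    show E (E.symm (h (E (G (E.symm x))))) = h (E (G (E.symm x)))
    rw [E.apply_symm_apply]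
  obtain ⟨r, hcompat, hfinal⟩ := directSum_scalar_of_comm (fun i => p i ^ e i) T hT
  obtain ⟨s, hs⟩ := crt_compat p hp e r hcompat
  have hTx : ∀ x, T x = s • x := hfinal s hs
  refine ⟨s, ?_⟩
  apply LinearMap.ext
  intro m
  have e1 : G (Module.AEval'.of f m) = s • Module.AEval'.of f m := by
    have := hTx (E (Module.AEval'.of f m))
    rw [hTE] at this
    have := congrArg E.symm this
    rw [E.symm_apply_apply, map_smul, E.symm_apply_apply] at this
    exact this
  rw [hG] at e1
  have e2 : s • Module.AEval'.of f m =
      Module.AEval'.of f (Polynomial.aeval f s • m) :=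
    (Module.AEval.of_aeval_smul f s m).symm
  rw [e2] at e1
  have := (Module.AEval'.of f).injective e1
  exact this

/-- The centralizer of a matrix `A`: all matrices commuting with `A`. -/
def centralizer {n : ℕ} {F : Type*} [Field F] (A : Matrix (Fin n) (Fin n) F) :
    Set (Matrix (Fin n) (Fin n) F) :=
  {X | A * X = X * A}

/-- `A` and `B` are polynomially equivalent: each is a polynomial in the other. -/
def PolyEquiv {n : ℕ} {F : Type*} [Field F] (A B : Matrix (Fin n) (Fin n) F) : Prop :=
  ∃ f g : Polynomial F, B = Polynomial.aeval A f ∧ A = Polynomial.aeval B g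

/-- Forward direction at the matrix level. -/
lemma poly_of_centralizer {n : ℕ} {F : Type*} [Field F]
    (A B : Matrix (Fin n) (Fin n) F)
    (h : centralizer A = centralizer B) : ∃ f : Polynomial F, B = Polynomial.aeval A f := by
  classical
  let Φ : Matrix (Fin n) (Fin n) F ≃ₐ[F] Module.End F (Fin n → F) :=
    Matrix.toLinAlgEquiv'
  have Hc : ∀ hEnd : Module.End F (Fin n → F), Commute (Φ A) hEnd → Commute (Φ B) hEnd := by
    intro hEnd hcomm
    set Xm := Φ.symm hEnd with hXm
    have hX : A * Xm = Xm * A := by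
      apply Φ.injective
      rw [map_mul, map_mul, Φ.apply_symm_apply]
      exact hcomm
    have hX' : Xm ∈ centralizer A := hX
    rw [h] at hX'
    have hBX : B * Xm = Xm * B := hX'
    show Φ B * hEnd = hEnd * Φ B
    have : Φ (B * Xm) = Φ (Xm * B) := congrArg Φ hBX
    rw [map_mul, map_mul, Φ.apply_symm_apply] at this
    exact this
  obtain ⟨pol, hpol⟩ := bicomm (Φ A) (Φ B) Hc
  refine ⟨pol, ?_⟩
  apply Φ.injective
  rw [Polynomial.aeval_algEquiv] at hpol
  simpa using hpol

theorem centralizer_eq_iff_polyEquiv {n : ℕ} {F : Type*} [Field F] [CharZero F]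
    (A B : Matrix (Fin n) (Fin n) F) :
    centralizer A = centralizer B ↔ PolyEquiv A B := by
  constructor
  · intro hC
    obtain ⟨f1, h1⟩ := poly_of_centralizer A B hC
    obtain ⟨g1, h2⟩ := poly_of_centralizer B A hC.symm
    exact ⟨f1, g1, h1, h2⟩
  · rintro ⟨f1, g1, hB, hA⟩
    ext Xm
    constructor
    · intro hX
      have hXA : Commute Xm A := (show A * Xm = Xm * A from hX).symm
      have : Commute Xm B := by
        rw [hB]
        exact Algebra.commute_of_mem_adjoin_singleton_of_commute
          (Polynomial.aeval_mem_adjoin_singleton F A) hXA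
      exact (this.symm : B * Xm = Xm * B)
    · intro hX
      have hXB : Commute Xm B := (show B * Xm = Xm * B from hX).symm
      have : Commute Xm A := by
        rw [hA]
        exact Algebra.commute_of_mem_adjoin_singleton_of_commute
          (Polynomial.aeval_mem_adjoin_singleton F B) hXB
      exact (this.symm : A * Xm = Xm * A)
end

section
/- Let F be a field of characteristic zero and let A, B ∈ Mₙ(F) be balanced matrices, i.e., A is similar to −A and B is similar to −B. Then 𝒞𝓛(A) = 𝒞𝓛(B) if and only if A and B are odd polynomially equivalent. -/
/-
Auxiliary development: a bicommutant theorem for matrices over a field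
(every matrix commuting with everything that commutes with `A` is a
polynomial in `A`), proved via self-injectivity of quotients of PIDs,
plus odd/even polynomial bookkeeping.
-/

namespace CliffAux

open Polynomial MulOpposite



variable {n : ℕ} {F : Type*} [Field F]

lemma aeval_op {R A : Type*} [CommSemiring R] [Semiring A] [Algebra R A] (a : A) (p : R[X]) :
    aeval (op a) p = op (aeval a p) := by
  induction p using Polynomial.induction_on' with
  | add p q hp hq => simp [hp, hq]
  | monomial k c =>
    simp only [aeval_monomial, MulOpposite.algebraMap_apply, ← op_pow, ← op_mul]
    rw [Algebra.commutes]

lemma baer_quotient_pid {R : Type*} [CommRing R] [IsDomain R] [IsPrincipalIdealRing R]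
    (f₀ : R) (hf : f₀ ≠ 0) :
    Module.Baer (R ⧸ Ideal.span {f₀}) (R ⧸ Ideal.span {f₀}) := by
  set I := Ideal.span {f₀} with hI
  set S := R ⧸ I
  intro J φ
  set J' := J.comap (Ideal.Quotient.mk I) with hJ'
  obtain ⟨g, hg⟩ : Submodule.IsPrincipal J' := IsPrincipalIdealRing.principal J'
  have hfJ' : f₀ ∈ J' := by
    simp only [hJ', Ideal.mem_comap]
    have : (Ideal.Quotient.mk I) f₀ = 0 := Ideal.Quotient.eq_zero_iff_mem.2
      (Ideal.subset_span rfl)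
    rw [this]; exact J.zero_mem
  have hgdvd : g ∣ f₀ := by
    rw [hg] at hfJ'
    exact (Ideal.mem_span_singleton).1 hfJ'
  obtain ⟨k, hk⟩ := hgdvd
  have hgJ : (Ideal.Quotient.mk I) g ∈ J := by
    have : g ∈ J' := hg ▸ Ideal.subset_span rfl
    exact this
  obtain ⟨h, hh⟩ := Ideal.Quotient.mk_surjective (φ ⟨(Ideal.Quotient.mk I) g, hgJ⟩)
  have hk0 : k ≠ 0 := by rintro rfl; rw [mul_zero] at hk; exact hf hk
  have hkg : (Ideal.Quotient.mk I k) • (⟨(Ideal.Quotient.mk I) g, hgJ⟩ : J) = 0 := by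
    apply Subtype.ext
    show (Ideal.Quotient.mk I k) * (Ideal.Quotient.mk I) g = 0
    rw [← map_mul, Ideal.Quotient.eq_zero_iff_mem]
    exact Ideal.mem_span_singleton.2 ⟨1, by rw [hk]; ring⟩
  have hkh : (Ideal.Quotient.mk I) (k * h) = 0 := by
    have := congrArg (φ ·) hkg
    simp only [map_smul, map_zero] at this
    rw [← hh] at this
    simpa [smul_eq_mul, ← map_mul] using this
  have hdvd : g ∣ h := by
    rw [Ideal.Quotient.eq_zero_iff_mem, hI, Ideal.mem_span_singleton, hk] at hkh
    have h2 : g * k ∣ h * k := by rwa [mul_comm k h] at hkh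
    exact (mul_dvd_mul_iff_right hk0).1 h2
  obtain ⟨m, hm⟩ := hdvd
  refine ⟨LinearMap.toSpanSingleton S S ((Ideal.Quotient.mk I) m), ?_⟩
  intro x hx
  obtain ⟨r, rfl⟩ := Ideal.Quotient.mk_surjective x
  have hrJ' : r ∈ J' := hx
  rw [hg, Submodule.mem_span_singleton] at hrJ'
  obtain ⟨c, hc⟩ := hrJ'
  have hcg : c * g = r := by simpa [smul_eq_mul] using hc
  have heq : (⟨(Ideal.Quotient.mk I) r, hx⟩ : J)
      = (Ideal.Quotient.mk I c) • (⟨(Ideal.Quotient.mk I) g, hgJ⟩ : J) := by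
    apply Subtype.ext
    show _ = (Ideal.Quotient.mk I c) * (Ideal.Quotient.mk I) g
    rw [← map_mul, hcg]
  rw [heq, map_smul, ← hh]
  show (Ideal.Quotient.mk I) r • (Ideal.Quotient.mk I) m = (Ideal.Quotient.mk I c) • (Ideal.Quotient.mk I) h
  simp only [smul_eq_mul, ← map_mul]
  congr 1
  rw [← hcg, hm]
  ring

universe u

theorem exists_proj_module {R : Type u} [CommRing R] [IsDomain R] [IsPrincipalIdealRing R]
    {M : Type u} [AddCommGroup M] [Module R M] (f₀ : R) (hf : f₀ ≠ 0)
    (htor : ∀ x : M, f₀ • x = 0) (w : M) (hw : ∀ r : R, r • w = 0 → f₀ ∣ r) :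
    ∃ Φ : M →ₗ[R] M, Φ w = w ∧ ∀ x, ∃ r : R, Φ x = r • w := by
  classical
  have hTor : Module.IsTorsionBySet R M ((Ideal.span {f₀} : Ideal R) : Set R) := by
    intro x a
    obtain ⟨c, hc⟩ := Ideal.mem_span_singleton.1 a.2
    calc (a : R) • x = (f₀ * c) • x := by rw [← hc]
    _ = f₀ • (c • x) := mul_smul _ _ _
    _ = 0 := htor _
  letI : Module (R ⧸ Ideal.span {f₀}) M := hTor.module
  haveI hTower : IsScalarTower R (R ⧸ Ideal.span {f₀}) M := hTor.isScalarTower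
  set ψ : (R ⧸ Ideal.span {f₀}) →ₗ[R ⧸ Ideal.span {f₀}] M :=
    LinearMap.toSpanSingleton _ M w with hψ
  have hψ_apply : ∀ r : R, ψ (Ideal.Quotient.mk _ r) = r • w := by
    intro r
    exact hTor.mk_smul r w
  have hinj : Function.Injective ψ := by
    rw [injective_iff_map_eq_zero]
    intro s hs
    obtain ⟨p, rfl⟩ := Ideal.Quotient.mk_surjective s
    rw [hψ_apply] at hs
    rw [Ideal.Quotient.eq_zero_iff_mem]
    exact Ideal.mem_span_singleton.2 (hw p hs)
  haveI : Module.Injective (R ⧸ Ideal.span {f₀}) (R ⧸ Ideal.span {f₀}) :=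
    (baer_quotient_pid f₀ hf).injective
  obtain ⟨π, hπ⟩ := Module.Injective.out ψ hinj LinearMap.id
  refine ⟨((ψ ∘ₗ π).restrictScalars R), ?_, ?_⟩
  · show ψ (π w) = w
    have h1 : ψ 1 = w := by rw [hψ]; simp
    rw [← h1, hπ 1]
    simp [h1]
  · intro x
    obtain ⟨p, hp⟩ := Ideal.Quotient.mk_surjective (π x)
    exact ⟨p, by show ψ (π x) = _; rw [← hp, hψ_apply]⟩

theorem exists_proj (A : Matrix (Fin n) (Fin n) F) :
    ∃ Φ : Matrix (Fin n) (Fin n) F →ₗ[F] Matrix (Fin n) (Fin n) F,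
      Φ 1 = 1 ∧ (∀ X, Φ (X * A) = Φ X * A) ∧ ∀ X, ∃ p : F[X], Φ X = aeval A p := by
  classical
  set e := Module.AEval.of F (Matrix (Fin n) (Fin n) F) (op A) with he
  have hsmul : ∀ (p : F[X]) (X : Matrix (Fin n) (Fin n) F),
      e.symm (p • (e X)) = X * aeval A p := by
    intro p X
    rw [Module.AEval.of_symm_smul, LinearEquiv.symm_apply_apply, aeval_op, op_smul_eq_mul]
  have htor : ∀ x : Module.AEval F (Matrix (Fin n) (Fin n) F) (op A), (minpoly F A) • x = 0 := by
    intro x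
    apply e.symm.injective
    rw [map_zero]
    have h2 := hsmul (minpoly F A) (e.symm x)
    rw [LinearEquiv.apply_symm_apply] at h2
    rw [h2, minpoly.aeval, Matrix.mul_zero]
  have hw : ∀ r : F[X], r • (e 1) = 0 → (minpoly F A) ∣ r := by
    intro r hr
    apply minpoly.dvd F A
    have h2 := hsmul r 1
    rw [hr, map_zero, Matrix.one_mul] at h2
    exact h2.symm
  obtain ⟨Φ, hΦw, hΦr⟩ := exists_proj_module (minpoly F A)
    (minpoly.ne_zero (Algebra.IsIntegral.isIntegral A)) htor (e 1) hw
  refine ⟨e.symm.toLinearMap ∘ₗ (Φ.restrictScalars F) ∘ₗ e.toLinearMap, ?_, ?_, ?_⟩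
  · show e.symm (Φ (e 1)) = 1
    rw [hΦw, LinearEquiv.symm_apply_apply]
  · intro X
    show e.symm (Φ (e (X * A))) = e.symm (Φ (e X)) * A
    have hXA : e (X * A) = (Polynomial.X : F[X]) • e X := by
      apply e.symm.injective
      rw [hsmul, aeval_X, LinearEquiv.symm_apply_apply]
    rw [hXA, map_smul]
    have h3 := hsmul Polynomial.X (e.symm (Φ (e X)))
    rw [LinearEquiv.apply_symm_apply, aeval_X] at h3
    exact h3
  · intro X
    obtain ⟨p, hp⟩ := hΦr (e X)
    refine ⟨p, ?_⟩
    show e.symm (Φ (e X)) = _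
    rw [hp]
    have h2 := hsmul p 1
    rw [Matrix.one_mul] at h2
    exact h2

lemma single_row_mul (i : Fin n) (v : Fin n → F) (C : Matrix (Fin n) (Fin n) F) :
    (Matrix.of (Pi.single i v)) * C = Matrix.of (Pi.single i (Matrix.vecMul v C)) := by
  ext k l
  by_cases hk : k = i
  · subst hk
    simp [Matrix.mul_apply, Matrix.vecMul, dotProduct]
  · simp [Matrix.mul_apply, Pi.single_apply, hk]

lemma row_of_mul (M N : Matrix (Fin n) (Fin n) F) (i : Fin n) :
    (M * N) i = Matrix.vecMul (M i) N := by
  funext l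
  simp [Matrix.mul_apply, Matrix.vecMul, dotProduct]

lemma exists_vecMul_rep (φ : (Fin n → F) →ₗ[F] (Fin n → F)) :
    ∃ C : Matrix (Fin n) (Fin n) F, ∀ v, φ v = Matrix.vecMul v C := by
  refine ⟨LinearMap.toMatrixRight' φ, fun v => ?_⟩
  conv_lhs => rw [← LinearMap.toMatrixRight'.symm_apply_apply φ]
  rfl

/-- row component of a matrix linear map -/
def rowcomp (Φ : Matrix (Fin n) (Fin n) F →ₗ[F] Matrix (Fin n) (Fin n) F) (i j : Fin n) :
    (Fin n → F) →ₗ[F] (Fin n → F) where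
  toFun u := Φ (Matrix.of (Pi.single i u)) j
  map_add' u v := by
    have h : Matrix.of (Pi.single i (u + v))
        = Matrix.of (Pi.single i u) + Matrix.of (Pi.single i v) := by
      show Matrix.of (Pi.single i (u + v)) = Matrix.of ((Pi.single i u : Fin n → Fin n → F) + Pi.single i v)
      rw [Pi.single_add]
    show Φ (Matrix.of (Pi.single i (u + v))) j = _
    rw [h, map_add]
    rfl
  map_smul' c u := by
    have h : Matrix.of (Pi.single i (c • u))
        = c • Matrix.of (Pi.single i u) := by
      show Matrix.of (Pi.single i (c • u)) = Matrix.of (c • (Pi.single i u : Fin n → Fin n → F))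
      rw [Pi.single_smul]
    show Φ (Matrix.of (Pi.single i (c • u))) j = _
    rw [h, map_smul]
    rfl

lemma comm_transfer (A B : Matrix (Fin n) (Fin n) F)
    (h : ∀ C : Matrix (Fin n) (Fin n) F, A * C = C * A → B * C = C * B)
    (Φ : Matrix (Fin n) (Fin n) F →ₗ[F] Matrix (Fin n) (Fin n) F)
    (hΦ : ∀ X, Φ (X * A) = Φ X * A) :
    ∀ X, Φ (X * B) = Φ X * B := by
  classical
  have key : ∀ (i : Fin n) (v : Fin n → F),
      Φ (Matrix.of (Pi.single i (Matrix.vecMul v B))) = Φ (Matrix.of (Pi.single i v)) * B := by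
    intro i
    have hcomm : ∀ j : Fin n, ∃ C,
        (∀ v, Φ (Matrix.of (Pi.single i v)) j = Matrix.vecMul v C) ∧ B * C = C * B := by
      intro j
      obtain ⟨C, hC⟩ := exists_vecMul_rep (rowcomp Φ i j)
      have hC' : ∀ v, Φ (Matrix.of (Pi.single i v)) j = Matrix.vecMul v C := fun v => hC v
      have hAC : A * C = C * A := by
        have hv : ∀ v, Matrix.vecMul v (A * C) = Matrix.vecMul v (C * A) := by
          intro v
          rw [← Matrix.vecMul_vecMul, ← hC' (Matrix.vecMul v A),
            show Matrix.of (Pi.single i (Matrix.vecMul v A))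
              = Matrix.of (Pi.single i v) * A from (single_row_mul i v A).symm,
            hΦ, row_of_mul, hC' v, Matrix.vecMul_vecMul]
        ext k l
        have hkl := congrFun (hv (Pi.single k 1)) l
        simpa [Matrix.single_vecMul] using hkl
      exact ⟨C, hC', h C hAC⟩
    choose C hC hBC using hcomm
    intro v
    funext j l
    have lhs : Φ (Matrix.of (Pi.single i (Matrix.vecMul v B))) j
        = Matrix.vecMul v (B * C j) := by
      rw [hC j, Matrix.vecMul_vecMul]
    calc Φ (Matrix.of (Pi.single i (Matrix.vecMul v B))) j l
        = Matrix.vecMul v (B * C j) l := by rw [lhs]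
      _ = Matrix.vecMul v (C j * B) l := by rw [hBC j]
      _ = Matrix.vecMul (Matrix.vecMul v (C j)) B l := by rw [Matrix.vecMul_vecMul]
      _ = Matrix.vecMul (Φ (Matrix.of (Pi.single i v)) j) B l := by rw [hC j]
      _ = (Φ (Matrix.of (Pi.single i v)) * B) j l := by rw [row_of_mul]
  intro X
  have hXd : X = ∑ k, Matrix.of (Pi.single k (X k)) := (Finset.univ_sum_single X).symm
  conv_lhs => rw [hXd]
  rw [Matrix.sum_mul, map_sum]
  simp_rw [single_row_mul, key]
  rw [← Matrix.sum_mul, ← map_sum, ← hXd]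

theorem exists_aeval_of_comm (A B : Matrix (Fin n) (Fin n) F)
    (h : ∀ C : Matrix (Fin n) (Fin n) F, A * C = C * A → B * C = C * B) :
    ∃ p : F[X], B = aeval A p := by
  obtain ⟨Φ, h1, hA, hrange⟩ := exists_proj A
  have hB := comm_transfer A B h Φ hA
  obtain ⟨p, hp⟩ := hrange B
  have hfix : Φ B = B := by
    conv_lhs => rw [show B = 1 * B from (one_mul B).symm]
    rw [hB 1, h1, one_mul]
  exact ⟨p, by rw [← hfix, hp]⟩

-- sign rules for powers against an anticommuting matrix
lemma pow_anticomm (A X : Matrix (Fin n) (Fin n) F) (hx : A * X = -(X * A)) (k : ℕ) :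
    A ^ k * X = ((-1 : F) ^ k) • (X * A ^ k) := by
  induction k with
  | zero => simp
  | succ k ih =>
    rw [pow_succ, pow_succ]
    calc A ^ k * A * X = A ^ k * (A * X) := by rw [Matrix.mul_assoc]
      _ = A ^ k * (-(X * A)) := by rw [hx]
      _ = -(A ^ k * X * A) := by rw [Matrix.mul_neg, Matrix.mul_assoc]
      _ = -((((-1 : F) ^ k) • (X * A ^ k)) * A) := by rw [ih]
      _ = ((-1 : F) ^ k * -1) • (X * (A ^ k * A)) := by
          rw [Matrix.smul_mul, Matrix.mul_assoc, ← neg_smul]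
          congr 1
          ring
  
lemma odd_aeval_anticomm (A X : Matrix (Fin n) (Fin n) F) (hx : A * X = -(X * A))
    (q : F[X]) (hq : ∀ i ∈ q.support, Odd i) :
    aeval A q * X = -(X * aeval A q) := by
  conv_lhs => rw [q.as_sum_support]
  conv_rhs => rw [q.as_sum_support]
  rw [map_sum, Matrix.sum_mul, Matrix.mul_sum, ← Finset.sum_neg_distrib]
  apply Finset.sum_congr rfl
  intro i hi
  rw [aeval_monomial, ← Algebra.smul_def, Matrix.smul_mul, Matrix.mul_smul, ← smul_neg]
  congr 1
  rw [pow_anticomm A X hx i, Odd.neg_one_pow (hq i hi), neg_one_smul]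

lemma pow_conj (A P : Matrix (Fin n) (Fin n) F) (hP : A * P = -(P * A)) (k : ℕ) :
    A ^ k * P = P * (-A) ^ k := by
  induction k with
  | zero => simp
  | succ k ih =>
    rw [pow_succ, pow_succ, Matrix.mul_assoc, hP]
    calc A ^ k * (-(P * A)) = -(A ^ k * P * A) := by
          rw [Matrix.mul_neg, Matrix.mul_assoc]
      _ = -(P * (-A) ^ k * A) := by rw [ih]
      _ = P * ((-A) ^ k * -A) := by
          rw [Matrix.mul_assoc, Matrix.mul_neg, Matrix.mul_neg]

lemma aeval_conj (A P : Matrix (Fin n) (Fin n) F) (hP : A * P = -(P * A)) (p : F[X]) :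
    aeval A p * P = P * aeval (-A) p := by
  conv_lhs => rw [p.as_sum_support]
  conv_rhs => rw [p.as_sum_support]
  rw [map_sum, map_sum, Matrix.sum_mul, Matrix.mul_sum]
  apply Finset.sum_congr rfl
  intro i _
  rw [aeval_monomial, aeval_monomial, ← Algebra.smul_def, ← Algebra.smul_def,
    Matrix.smul_mul, Matrix.mul_smul, pow_conj A P hP]

lemma aeval_neg_of_odd (A : Matrix (Fin n) (Fin n) F) (q : F[X])
    (hq : ∀ i ∈ q.support, Odd i) : aeval (-A) q = -(aeval A q) := by
  conv_lhs => rw [q.as_sum_support]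
  conv_rhs => rw [q.as_sum_support]
  rw [map_sum, map_sum, ← Finset.sum_neg_distrib]
  apply Finset.sum_congr rfl
  intro i hi
  rw [aeval_monomial, aeval_monomial, ← Algebra.smul_def, ← Algebra.smul_def,
    Odd.neg_pow (hq i hi), smul_neg]

lemma aeval_neg_of_even (A : Matrix (Fin n) (Fin n) F) (q : F[X])
    (hq : ∀ i ∈ q.support, ¬ Odd i) : aeval (-A) q = aeval A q := by
  conv_lhs => rw [q.as_sum_support]
  conv_rhs => rw [q.as_sum_support]
  rw [map_sum, map_sum]
  apply Finset.sum_congr rfl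
  intro i hi
  rw [aeval_monomial, aeval_monomial,
    Even.neg_pow (Nat.not_odd_iff_even.1 (hq i hi))]

open Classical in
/-- odd part of a polynomial -/
noncomputable def oddPart (p : F[X]) : F[X] :=
  ∑ i ∈ p.support.filter (fun i => Odd i), monomial i (p.coeff i)

open Classical in
/-- even part of a polynomial -/
noncomputable def evenPart (p : F[X]) : F[X] :=
  ∑ i ∈ p.support.filter (fun i => ¬ Odd i), monomial i (p.coeff i)

open Classical in
lemma oddPart_add_evenPart (p : F[X]) : oddPart p + evenPart p = p := by
  rw [oddPart, evenPart, Finset.sum_filter_add_sum_filter_not]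
  exact p.as_sum_support.symm

open Classical in
lemma support_oddPart (p : F[X]) : ∀ i ∈ (oddPart p).support, Odd i := by
  intro i hi
  by_contra hodd
  apply Polynomial.mem_support_iff.1 hi
  rw [oddPart, Polynomial.finset_sum_coeff]
  apply Finset.sum_eq_zero
  intro j hj
  rw [Polynomial.coeff_monomial]
  rcases Finset.mem_filter.1 hj with ⟨_, hjodd⟩
  have : j ≠ i := fun hji => hodd (hji ▸ hjodd)
  simp [this]

open Classical in
lemma support_evenPart (p : F[X]) : ∀ i ∈ (evenPart p).support, ¬ Odd i := by
  intro i hi hodd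
  apply Polynomial.mem_support_iff.1 hi
  rw [evenPart, Polynomial.finset_sum_coeff]
  apply Finset.sum_eq_zero
  intro j hj
  rw [Polynomial.coeff_monomial]
  rcases Finset.mem_filter.1 hj with ⟨_, hjodd⟩
  have : j ≠ i := fun hji => hjodd (hji ▸ hodd)
  simp [this]

lemma exists_odd_poly [CharZero F] (A B P : Matrix (Fin n) (Fin n) F)
    (Q : Matrix (Fin n) (Fin n) F) (hQ : Q * P = 1)
    (hPA : A * P = -(P * A)) (hPB : B * P = -(P * B)) (p : F[X]) (hp : B = aeval A p) :
    ∃ q : F[X], (∀ i ∈ q.support, Odd i) ∧ B = aeval A q := by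
  have h1 : P * aeval (-A) p = P * (-(aeval A p)) := by
    rw [← aeval_conj A P hPA p, ← hp, hPB, hp, Matrix.mul_neg]
  have h2 : aeval (-A) p = -(aeval A p) := by
    have := congrArg (fun Y => Q * Y) h1
    simpa [← Matrix.mul_assoc, hQ] using this
  -- decompose
  have hdec := congrArg (aeval A) (oddPart_add_evenPart p)
  rw [map_add] at hdec
  have hdecneg := congrArg (aeval (-A)) (oddPart_add_evenPart p)
  rw [map_add, aeval_neg_of_odd A _ (support_oddPart p),
    aeval_neg_of_even A _ (support_evenPart p), h2, ← hdec] at hdecneg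
  -- hdecneg : -(aeval A (oddPart p)) + aeval A (evenPart p)
  --   = -(aeval A (oddPart p) + aeval A (evenPart p))
  have hE : aeval A (evenPart p) = 0 := by
    have h3 : aeval A (evenPart p) + aeval A (evenPart p) = 0 := by
      have := hdecneg
      rw [neg_add] at this
      linear_combination (norm := abel) this
    have h4 : (2 : F) • aeval A (evenPart p) = 0 := by
      rw [two_smul]; exact h3
    rcases smul_eq_zero.1 h4 with h | h
    · exact absurd h two_ne_zero
    · exact h
  exact ⟨oddPart p, support_oddPart p, by rw [hp, ← hdec, hE, add_zero]⟩

end CliffAux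

open Polynomial

/-- The clifforder of a matrix `A`: all matrices anti-commuting with `A`. -/
def clifforder {n : ℕ} {F : Type*} [Field F] (A : Matrix (Fin n) (Fin n) F) :
    Set (Matrix (Fin n) (Fin n) F) :=
  {X | A * X = -(X * A)}

/-- `A` and `B` are odd polynomially equivalent: each is an odd polynomial in the other. -/
def OddPolyEquiv {n : ℕ} {F : Type*} [Field F] (A B : Matrix (Fin n) (Fin n) F) : Prop :=
  ∃ f g : Polynomial F,
    (∀ i ∈ f.support, Odd i) ∧ (∀ i ∈ g.support, Odd i) ∧
    B = Polynomial.aeval A f ∧ A = Polynomial.aeval B g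

/-- `A` is balanced: `A` is similar to `-A`. -/
def IsBalanced {n : ℕ} {F : Type*} [Field F] (A : Matrix (Fin n) (Fin n) F) : Prop :=
  ∃ P : Matrix (Fin n) (Fin n) F, IsUnit P ∧ -A = P⁻¹ * A * P




/-- extract an anticommuting invertible matrix from balancedness -/
lemma CliffAux.balanced_anticomm {n : ℕ} {F : Type*} [Field F] {A : Matrix (Fin n) (Fin n) F} (hA : IsBalanced A) :
    ∃ P Q : Matrix (Fin n) (Fin n) F, P * Q = 1 ∧ Q * P = 1 ∧ A * P = -(P * A) := by
  obtain ⟨P, hPu, hP⟩ := hA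
  have hPd : IsUnit P.det := (Matrix.isUnit_iff_isUnit_det P).1 hPu
  have h1 : P * P⁻¹ = 1 := Matrix.mul_nonsing_inv P hPd
  have h2 : P⁻¹ * P = 1 := Matrix.nonsing_inv_mul P hPd
  refine ⟨P, P⁻¹, h1, h2, ?_⟩
  have h3 : P * -A = P * (P⁻¹ * A * P) := by rw [← hP]
  rw [Matrix.mul_neg, ← Matrix.mul_assoc, ← Matrix.mul_assoc, h1, Matrix.one_mul] at h3
  rw [← h3]

theorem clifforder_eq_iff_oddPolyEquiv_of_balanced {n : ℕ} {F : Type*} [Field F] [CharZero F]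
    (A B : Matrix (Fin n) (Fin n) F) (hA : IsBalanced A) (hB : IsBalanced B) :
    clifforder A = clifforder B ↔ OddPolyEquiv A B := by
  constructor
  · intro hAB
    obtain ⟨P, Pi, hPPi, hPiP, hPA⟩ := CliffAux.balanced_anticomm hA
    obtain ⟨R, Ri, hRRi, hRiR, hRB⟩ := CliffAux.balanced_anticomm hB
    have hmm : ∀ X : Matrix (Fin n) (Fin n) F, X ∈ clifforder A ↔ X ∈ clifforder B :=
      fun X => by rw [hAB]
    have hPB : B * P = -(P * B) := (hmm P).1 hPA
    have hRA : A * R = -(R * A) := (hmm R).2 hRB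
    -- commutant transfer A → B
    have hcommAB : ∀ C : Matrix (Fin n) (Fin n) F, A * C = C * A → B * C = C * B := by
      intro C hC
      have hX : A * (Pi * C) = -((Pi * C) * A) := by
        have hPA' : P * A = -(A * P) := by rw [hPA, neg_neg]
        have hPiA : A * Pi = -(Pi * A) := by
          calc A * Pi = Pi * (P * A * Pi) := by
                rw [← Matrix.mul_assoc, ← Matrix.mul_assoc, hPiP, Matrix.one_mul]
            _ = Pi * (-(A * P) * Pi) := by rw [← hPA']
            _ = -(Pi * A * (P * Pi)) := by noncomm_ring
            _ = -(Pi * A) := by rw [hPPi, Matrix.mul_one]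
        calc A * (Pi * C) = (A * Pi) * C := by rw [Matrix.mul_assoc]
          _ = -(Pi * A) * C := by rw [hPiA]
          _ = -(Pi * (A * C)) := by noncomm_ring
          _ = -(Pi * (C * A)) := by rw [hC]
          _ = -((Pi * C) * A) := by noncomm_ring
      have hXB : B * (Pi * C) = -((Pi * C) * B) := (hmm (Pi * C)).1 hX
      calc B * C = B * (P * Pi) * C := by rw [hPPi, Matrix.mul_one]
        _ = (B * P) * (Pi * C) := by noncomm_ring
        _ = -(P * B) * (Pi * C) := by rw [hPB]
        _ = -(P * (B * (Pi * C))) := by noncomm_ring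
        _ = -(P * -((Pi * C) * B)) := by rw [hXB]
        _ = (P * Pi) * (C * B) := by noncomm_ring
        _ = C * B := by rw [hPPi, Matrix.one_mul]
    have hcommBA : ∀ C : Matrix (Fin n) (Fin n) F, B * C = C * B → A * C = C * A := by
      intro C hC
      have hX : B * (Ri * C) = -((Ri * C) * B) := by
        have hRB' : R * B = -(B * R) := by rw [hRB, neg_neg]
        have hRiB : B * Ri = -(Ri * B) := by
          calc B * Ri = Ri * (R * B * Ri) := by
                rw [← Matrix.mul_assoc, ← Matrix.mul_assoc, hRiR, Matrix.one_mul]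
            _ = Ri * (-(B * R) * Ri) := by rw [← hRB']
            _ = -(Ri * B * (R * Ri)) := by noncomm_ring
            _ = -(Ri * B) := by rw [hRRi, Matrix.mul_one]
        calc B * (Ri * C) = (B * Ri) * C := by rw [Matrix.mul_assoc]
          _ = -(Ri * B) * C := by rw [hRiB]
          _ = -(Ri * (B * C)) := by noncomm_ring
          _ = -(Ri * (C * B)) := by rw [hC]
          _ = -((Ri * C) * B) := by noncomm_ring
      have hXA : A * (Ri * C) = -((Ri * C) * A) := (hmm (Ri * C)).2 hX
      calc A * C = A * (R * Ri) * C := by rw [hRRi, Matrix.mul_one]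
        _ = (A * R) * (Ri * C) := by noncomm_ring
        _ = -(R * A) * (Ri * C) := by rw [hRA]
        _ = -(R * (A * (Ri * C))) := by noncomm_ring
        _ = -(R * -((Ri * C) * A)) := by rw [hXA]
        _ = (R * Ri) * (C * A) := by noncomm_ring
        _ = C * A := by rw [hRRi, Matrix.one_mul]
    obtain ⟨p, hp⟩ := CliffAux.exists_aeval_of_comm A B hcommAB
    obtain ⟨q, hq⟩ := CliffAux.exists_aeval_of_comm B A hcommBA
    obtain ⟨f, hfodd, hf⟩ := CliffAux.exists_odd_poly A B P Pi hPiP hPA hPB p hp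
    obtain ⟨g, hgodd, hg⟩ := CliffAux.exists_odd_poly B A R Ri hRiR hRB hRA q hq
    exact ⟨f, g, hfodd, hgodd, hf, hg⟩
  · intro ⟨f, g, hfodd, hgodd, hf, hg⟩
    ext X
    constructor
    · intro hX
      show B * X = -(X * B)
      rw [hf]
      exact CliffAux.odd_aeval_anticomm A X hX f hfodd
    · intro hX
      show A * X = -(X * A)
      rw [hg]
      exact CliffAux.odd_aeval_anticomm B X hX g hgodd
end

section
/- Let q be a positive integer, let ω ∈ ℂ be a primitive q-th root of unity, and let A, B ∈ Mₙ(ℂ) satisfy AB = ω·BA. Then (A + B)^q = A^q + B^q. -/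
open Finset

noncomputable def gc (ω : ℂ) : ℕ → ℕ → ℂ
  | 0, 0 => 1
  | 0, _+1 => 0
  | _+1, 0 => 1
  | m+1, k+1 => ω^(k+1) * gc ω m (k+1) + gc ω m k

lemma gc_zero (ω : ℂ) (m : ℕ) : gc ω m 0 = 1 := by cases m <;> rfl

lemma gc_succ (ω : ℂ) (m k : ℕ) :
    gc ω (m+1) (k+1) = ω^(k+1) * gc ω m (k+1) + gc ω m k := rfl

lemma gc_eq_zero (ω : ℂ) : ∀ m k, m < k → gc ω m k = 0 := by
  intro m
  induction m with
  | zero =>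
    intro k hk
    match k, hk with
    | j+1, _ => rfl
  | succ m ih =>
    intro k hk
    match k, hk with
    | j+1, hk =>
      rw [gc_succ, ih (j+1) (by omega), ih j (by omega)]
      ring

lemma gc_diag (ω : ℂ) : ∀ m, gc ω m m = 1 := by
  intro m
  induction m with
  | zero => rfl
  | succ m ih =>
    rw [gc_succ, gc_eq_zero ω m (m+1) (by omega), ih]
    ring

lemma gc_rel (ω : ℂ) : ∀ m j, (ω^(j+1) - 1) * gc ω m (j+1) = (ω^(m-j) - 1) * gc ω m j := by
  intro m
  induction m with
  | zero =>
    intro j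
    have h1 : gc ω 0 (j+1) = 0 := gc_eq_zero ω 0 (j+1) (by omega)
    have h2 : (0 : ℕ) - j = 0 := by omega
    rw [h1, h2, pow_zero]
    ring
  | succ m ih =>
    intro j
    match j with
    | 0 =>
      have e1 := ih 0
      rw [gc_succ, gc_zero, gc_zero] at *
      simp only [Nat.sub_zero] at *
      have : (ω^1 - 1) * (ω^1 * gc ω m 1 + 1) = ω^1 * ((ω^1-1) * gc ω m 1) + (ω^1 - 1) := by ring
      rw [this, e1, pow_succ]
      ring
    | i+1 =>
      rw [gc_succ, gc_succ]
      rcases lt_or_ge i m with him | him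
      · obtain ⟨d, rfl⟩ : ∃ d, m = i + d + 1 := ⟨m - i - 1, by omega⟩
        have e1 := ih (i+1)
        have e2 := ih i
        have s1 : i + d + 1 - (i+1) = d := by omega
        have s2 : i + d + 1 - i = d + 1 := by omega
        have s3 : i + d + 1 + 1 - (i+1) = d + 1 := by omega
        rw [s1] at e1
        rw [s2] at e2
        rw [s3]
        linear_combination ω^(i+2) * e1 + e2
      · -- i ≥ m : everything relevant vanishes
        have h1 : gc ω m (i+1) = 0 := gc_eq_zero ω m (i+1) (by omega)
        have h2 : gc ω m (i+2) = 0 := gc_eq_zero ω m (i+2) (by omega)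
        have h3 : m + 1 - (i+1) = 0 := by omega
        have e2 := ih i
        have h4 : m - i = 0 := by omega
        rw [h4, pow_zero] at e2
        rw [h1, h2, h3, pow_zero]
        -- goal: (ω^(i+1+1)-1) * (ω^(i+1+1)*0 + 0) = (1-1) * (ω^(i+1)*0 + gc ω m i)
        simp

lemma gc_q_zero (ω : ℂ) (q : ℕ) (hω : ω ^ q = 1)
    (hω' : ∀ k : ℕ, 1 ≤ k → k < q → ω ^ k ≠ 1) :
    ∀ k, 1 ≤ k → k < q → gc ω q k = 0 := by
  intro k hk1 hk2
  obtain ⟨m, rfl⟩ : ∃ m, q = m + 1 := ⟨q - 1, by omega⟩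
  obtain ⟨j, rfl⟩ : ∃ j, k = j + 1 := ⟨k - 1, by omega⟩
  have key : (ω^(j+1) - 1) * gc ω (m+1) (j+1) = 0 := by
    rw [gc_succ]
    have e := gc_rel ω m j
    have hjm : j < m := by omega
    have hmj : m - j + (j + 1) = m + 1 := by omega
    calc (ω^(j+1) - 1) * (ω^(j+1) * gc ω m (j+1) + gc ω m j)
        = ω^(j+1) * ((ω^(j+1) - 1) * gc ω m (j+1)) + (ω^(j+1) - 1) * gc ω m j := by ring
      _ = ω^(j+1) * ((ω^(m-j) - 1) * gc ω m j) + (ω^(j+1) - 1) * gc ω m j := by rw [e]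
      _ = (ω^(m-j) * ω^(j+1) - 1) * gc ω m j := by ring
      _ = (ω^(m+1) - 1) * gc ω m j := by rw [← pow_add, hmj]
      _ = 0 := by rw [hω]; ring
  have hne : ω^(j+1) - 1 ≠ 0 := sub_ne_zero.mpr (hω' (j+1) (by omega) hk2)
  exact (mul_eq_zero.mp key).resolve_left hne

lemma add_pow_gc {n : ℕ} (ω : ℂ) (A B : Matrix (Fin n) (Fin n) ℂ)
    (h : A * B = ω • (B * A)) (m : ℕ) :
    (A + B) ^ m = ∑ k ∈ range (m+1), gc ω m k • (B ^ k * A ^ (m - k)) := by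
  have hAB : ∀ k : ℕ, A * B ^ k = ω ^ k • (B ^ k * A) := by
    intro k
    induction k with
    | zero => simp
    | succ k ihk =>
      rw [pow_succ, ← mul_assoc, ihk, smul_mul_assoc, mul_assoc, h, mul_smul_comm,
        smul_smul, ← mul_assoc, ← pow_succ, ← pow_succ]
  induction m with
  | zero => simp [gc]
  | succ m ih =>
    rw [pow_succ', add_mul, ih, Finset.mul_sum, Finset.mul_sum]
    have e1 : ∀ k ∈ range (m+1),
        A * (gc ω m k • (B ^ k * A ^ (m - k)))
          = (ω^k * gc ω m k) • (B ^ k * A ^ (m + 1 - k)) := by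
      intro k hk
      have hk' : k ≤ m := by simpa [Nat.lt_succ_iff] using hk
      have hmk : m + 1 - k = (m - k) + 1 := by omega
      rw [mul_smul_comm, ← mul_assoc, hAB k, smul_mul_assoc, smul_smul, hmk,
        mul_assoc, ← pow_succ']
      congr 1
      ring
    have e2 : ∀ k ∈ range (m+1),
        B * (gc ω m k • (B ^ k * A ^ (m - k)))
          = gc ω m k • (B ^ (k+1) * A ^ (m - k)) := by
      intro k hk
      rw [mul_smul_comm, ← mul_assoc, ← pow_succ']
    rw [Finset.sum_congr rfl e1, Finset.sum_congr rfl e2]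
    rw [Finset.sum_range_succ' (fun k => gc ω (m+1) k • (B ^ k * A ^ (m + 1 - k))) (m+1)]
    rw [Finset.sum_range_succ' (fun k => (ω^k * gc ω m k) • (B ^ k * A ^ (m + 1 - k))) m]
    simp only [gc_succ, gc_zero, pow_zero, one_mul, one_smul, Nat.sub_zero,
      Nat.succ_sub_succ, add_smul]
    rw [Finset.sum_add_distrib]
    rw [Finset.sum_range_succ (fun k => (ω^(k+1) * gc ω m (k+1)) • (B ^ (k+1) * A ^ (m - k))) m]
    rw [gc_eq_zero ω m (m+1) (by omega)]
    simp only [mul_zero, zero_smul, add_zero]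
    abel

theorem potter {n q : ℕ} (hq : 0 < q) (ω : ℂ)
    (hω : ω ^ q = 1) (hω' : ∀ k : ℕ, 1 ≤ k → k < q → ω ^ k ≠ 1)
    (A B : Matrix (Fin n) (Fin n) ℂ) (h : A * B = ω • (B * A)) :
    (A + B) ^ q = A ^ q + B ^ q := by
  rw [add_pow_gc ω A B h q]
  rw [Finset.sum_range_succ]
  have htop : gc ω q q • (B ^ q * A ^ (q - q)) = B ^ q := by
    rw [gc_diag, Nat.sub_self, pow_zero, mul_one, one_smul]
  rw [htop]
  have hrest : ∑ k ∈ range q, gc ω q k • (B ^ k * A ^ (q - k)) = A ^ q := by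
    rw [Finset.sum_eq_single_of_mem 0 (Finset.mem_range.mpr hq)]
    · rw [gc_zero, one_smul, pow_zero, Nat.sub_zero, one_mul]
    · intro k hk hk0
      rw [gc_q_zero ω q hω hω' k (by omega) (Finset.mem_range.mp hk), zero_smul]
  rw [hrest]
end

section
/- Let q be a positive integer, let ω ∈ ℂ be a primitive q-th root of unity, and let A, B ∈ Mₙ(ℂ) satisfy AB = ω·BA. Then for all complex numbers s and t, (sA + tB)^q = s^q A^q + t^q B^q. -/
open Finset

/-- q-integer: [m] = 1 + ω + ... + ω^{m-1} -/
noncomputable def qint (ω : ℂ) (m : ℕ) : ℂ := ∑ i ∈ Finset.range m, ω ^ i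

/-- q-factorial -/
noncomputable def qfact (ω : ℂ) (m : ℕ) : ℂ := ∏ j ∈ Finset.range m, qint ω (j + 1)

/-- Gaussian binomial coefficient via Pascal-type recursion. -/
noncomputable def qb (ω : ℂ) : ℕ → ℕ → ℂ
  | _, 0 => 1
  | 0, _ + 1 => 0
  | n + 1, k + 1 => qb ω n k + ω ^ (k + 1) * qb ω n (k + 1)

lemma qb_zero (ω : ℂ) (m : ℕ) : qb ω m 0 = 1 := by cases m <;> rfl

lemma qb_eq_zero_of_lt (ω : ℂ) : ∀ {m k : ℕ}, m < k → qb ω m k = 0 := by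
  intro m
  induction m with
  | zero => intro k hk; match k, hk with
    | k + 1, _ => rfl
  | succ m ih =>
    intro k hk
    match k, hk with
    | k + 1, hk =>
      show qb ω m k + ω ^ (k + 1) * qb ω m (k + 1) = 0
      rw [ih (by omega), ih (by omega)]
      ring

lemma qb_diag (ω : ℂ) (m : ℕ) : qb ω m m = 1 := by
  induction m with
  | zero => rfl
  | succ m ih =>
    show qb ω m m + ω ^ (m + 1) * qb ω m (m + 1) = 1
    rw [ih, qb_eq_zero_of_lt ω (by omega)]
    ring

lemma qint_add (ω : ℂ) (a b : ℕ) : qint ω a + ω ^ a * qint ω b = qint ω (a + b) := by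
  induction b with
  | zero => simp [qint]
  | succ b ih =>
    have h1 : qint ω (b + 1) = qint ω b + ω ^ b := by
      rw [qint, Finset.sum_range_succ, ← qint]
    have h2 : qint ω (a + (b + 1)) = qint ω (a + b) + ω ^ (a + b) := by
      rw [show a + (b + 1) = (a + b) + 1 by omega, qint, Finset.sum_range_succ, ← qint]
    rw [h1, h2, ← ih]
    ring

lemma qb_key (ω : ℂ) : ∀ m k : ℕ, k ≤ m →
    qb ω m k * (qfact ω k * qfact ω (m - k)) = qfact ω m := by
  intro m
  induction m with
  | zero => intro k hk; interval_cases k; simp [qb_zero, qfact]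
  | succ m ih =>
    intro k hk
    cases k with
    | zero => simp [qb_zero, qfact]
    | succ k =>
      have hqb : qb ω (m + 1) (k + 1) = qb ω m k + ω ^ (k + 1) * qb ω m (k + 1) := rfl
      rw [hqb]
      rcases eq_or_lt_of_le hk with he | hlt
      · obtain rfl : k = m := by omega
        rw [qb_diag, qb_eq_zero_of_lt ω (Nat.lt_succ_self k)]
        simp [qfact]
      · have hkm : k + 1 ≤ m := by omega
        have h1 := ih k (by omega)
        have h2 := ih (k + 1) hkm
        have e1 : qfact ω (k + 1) = qfact ω k * qint ω (k + 1) := by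
          rw [qfact, Finset.prod_range_succ, ← qfact]
        have e2 : m + 1 - (k + 1) = (m - (k+1)) + 1 := by omega
        have e3 : qfact ω ((m - (k+1)) + 1) = qfact ω (m - (k+1)) * qint ω (m - k) := by
          rw [qfact, Finset.prod_range_succ, ← qfact, show m - (k+1) + 1 = m - k by omega]
        have e4 : qfact ω (m + 1) = qfact ω m * qint ω (m + 1) := by
          rw [qfact, Finset.prod_range_succ, ← qfact]
        have e5 : qint ω (k + 1) + ω ^ (k + 1) * qint ω (m - k) = qint ω (m + 1) := by
          rw [qint_add, show k + 1 + (m - k) = m + 1 by omega]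
        rw [e2, e3, e1, e4, ← e5]
        have hmk : m - k = (m - (k+1)) + 1 := by omega
        have h1' : qb ω m k * (qfact ω k * qfact ω (m - k)) = qfact ω m := h1
        rw [hmk] at h1'
        rw [e3] at h1'
        rw [e1] at h2
        linear_combination qint ω (k + 1) * h1' + ω ^ (k + 1) * qint ω (m - k) * h2

lemma qb_vanish {q : ℕ} (ω : ℂ) (hω : ω ^ q = 1)
    (hω' : ∀ k : ℕ, 1 ≤ k → k < q → ω ^ k ≠ 1)
    {k : ℕ} (hk1 : 1 ≤ k) (hkq : k < q) : qb ω q k = 0 := by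
  have hq2 : 2 ≤ q := by omega
  have hω1 : ω ≠ 1 := by
    have := hω' 1 le_rfl (by omega)
    simpa using this
  have hωs : ω - 1 ≠ 0 := sub_ne_zero.mpr hω1
  have hqint : ∀ j, 1 ≤ j → j < q → qint ω j ≠ 0 := by
    intro j hj1 hjq
    rw [qint, geom_sum_eq hω1]
    exact div_ne_zero (sub_ne_zero.mpr (hω' j hj1 hjq)) hωs
  have hfact : ∀ m, m < q → qfact ω m ≠ 0 := by
    intro m hm
    rw [qfact]
    refine Finset.prod_ne_zero_iff.mpr ?_
    intro j hj
    simp only [Finset.mem_range] at hj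
    exact hqint (j + 1) (by omega) (by omega)
  have hfq : qfact ω q = 0 := by
    rw [qfact]
    refine Finset.prod_eq_zero (i := q - 1) (by simp; omega) ?_
    rw [show q - 1 + 1 = q by omega, qint, geom_sum_eq hω1, hω]
    simp
  have h0 := qb_key ω q k (le_of_lt hkq)
  rw [hfq] at h0
  exact (mul_eq_zero.mp h0).resolve_right
    (mul_ne_zero (hfact k (by omega)) (hfact (q - k) (by omega)))

lemma comm_pow {n : ℕ} (ω : ℂ) (A B : Matrix (Fin n) (Fin n) ℂ)
    (h : A * B = ω • (B * A)) : ∀ k, A * B ^ k = ω ^ k • (B ^ k * A) := by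
  intro k
  induction k with
  | zero => simp
  | succ k ih =>
    calc A * B ^ (k + 1) = (A * B ^ k) * B := by rw [pow_succ, mul_assoc]
      _ = (ω ^ k • (B ^ k * A)) * B := by rw [ih]
      _ = ω ^ k • (B ^ k * (A * B)) := by rw [smul_mul_assoc, mul_assoc]
      _ = ω ^ k • (B ^ k * (ω • (B * A))) := by rw [h]
      _ = ω ^ (k + 1) • (B ^ (k + 1) * A) := by
          rw [mul_smul_comm, smul_smul, pow_succ, pow_succ, ← mul_assoc]

lemma potter_expand {n : ℕ} (ω : ℂ) (A B : Matrix (Fin n) (Fin n) ℂ)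
    (h : A * B = ω • (B * A)) (m : ℕ) :
    (B + A) ^ m = ∑ k ∈ Finset.range (m + 1), qb ω m k • (B ^ k * A ^ (m - k)) := by
  induction m with
  | zero => simp [qb_zero]
  | succ m ih =>
    rw [pow_succ', ih, add_mul, Finset.mul_sum, Finset.mul_sum]
    have hB : ∀ k ∈ Finset.range (m + 1),
        B * (qb ω m k • (B ^ k * A ^ (m - k))) = qb ω m k • (B ^ (k + 1) * A ^ (m - k)) := by
      intro k _
      rw [mul_smul_comm, ← mul_assoc, ← pow_succ']
    have hA : ∀ k ∈ Finset.range (m + 1),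
        A * (qb ω m k • (B ^ k * A ^ (m - k)))
          = (ω ^ k * qb ω m k) • (B ^ k * A ^ (m + 1 - k)) := by
      intro k hk
      simp only [Finset.mem_range] at hk
      rw [mul_smul_comm, ← mul_assoc, comm_pow ω A B h k, smul_mul_assoc, smul_smul,
        mul_assoc, ← pow_succ', show m - k + 1 = m + 1 - k by omega,
        mul_comm (qb ω m k) (ω ^ k)]
    rw [Finset.sum_congr rfl hB, Finset.sum_congr rfl hA]
    rw [Finset.sum_range_succ' (fun k => qb ω (m + 1) k • (B ^ k * A ^ (m + 1 - k))) (m + 1)]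
    have hqb : ∀ i, qb ω (m + 1) (i + 1) = qb ω m i + ω ^ (i + 1) * qb ω m (i + 1) :=
      fun i => rfl
    simp only [hqb, add_smul, Finset.sum_add_distrib, Nat.succ_sub_succ_eq_sub]
    rw [Finset.sum_range_succ' (fun k => (ω ^ k * qb ω m k) • (B ^ k * A ^ (m + 1 - k))) m]
    rw [Finset.sum_range_succ
      (fun i => (ω ^ (i + 1) * qb ω m (i + 1)) • (B ^ (i + 1) * A ^ (m - i))) m]
    rw [qb_eq_zero_of_lt ω (Nat.lt_succ_self m)]
    simp only [qb_zero, Nat.succ_sub_succ_eq_sub, pow_zero, one_mul, mul_zero, zero_smul,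
      add_zero, Nat.sub_zero, pow_zero, Matrix.one_mul]
    abel

theorem potter_scaled {n q : ℕ} (hq : 0 < q) (ω : ℂ)
    (hω : ω ^ q = 1) (hω' : ∀ k : ℕ, 1 ≤ k → k < q → ω ^ k ≠ 1)
    (A B : Matrix (Fin n) (Fin n) ℂ) (h : A * B = ω • (B * A)) :
    ∀ s t : ℂ, (s • A + t • B) ^ q = s ^ q • A ^ q + t ^ q • B ^ q := by
  intro s t
  have h' : (s • A) * (t • B) = ω • ((t • B) * (s • A)) := by
    rw [smul_mul_assoc, mul_smul_comm, h, smul_mul_assoc, mul_smul_comm,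
      smul_smul, smul_smul, smul_smul, smul_smul]
    congr 1
    ring
  obtain ⟨p, rfl⟩ : ∃ p, q = p + 1 := ⟨q - 1, by omega⟩
  have hexp := potter_expand ω (s • A) (t • B) h' (p + 1)
  rw [add_comm (s • A) (t • B), hexp, Finset.sum_range_succ, Finset.sum_range_succ']
  have hmid : ∀ i ∈ Finset.range p,
      qb ω (p + 1) (i + 1) • ((t • B) ^ (i + 1) * (s • A) ^ (p + 1 - (i + 1))) = 0 := by
    intro i hi
    simp only [Finset.mem_range] at hi
    rw [qb_vanish ω hω hω' (by omega) (by omega), zero_smul]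
  rw [Finset.sum_eq_zero hmid]
  rw [qb_zero, qb_diag]
  simp only [pow_zero, Matrix.one_mul, Nat.sub_zero, Nat.sub_self, Matrix.mul_one,
    one_smul, zero_add, smul_pow]
end

section
/- Let F be a field of characteristic zero and let A, B ∈ Mₙ(F). If 𝒞𝓛(A) = 𝒞𝓛(B) and A has 0 as an eigenvalue (equivalently, det A = 0), then B also has 0 as an eigenvalue (equivalently, det B = 0). -/
open Matrix

section helpers

variable {n : ℕ} {F : Type*} [Field F]

lemma CLaux.mul_vecMulVec (A : Matrix (Fin n) (Fin n) F) (v w : Fin n → F) :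
    A * vecMulVec v w = vecMulVec (A *ᵥ v) w := by
  ext i j
  simp [Matrix.mul_apply, Matrix.vecMulVec_apply, Matrix.mulVec, dotProduct,
    Finset.sum_mul, mul_assoc]

lemma CLaux.vecMulVec_mul (A : Matrix (Fin n) (Fin n) F) (v w : Fin n → F) :
    vecMulVec v w * A = vecMulVec v (w ᵥ* A) := by
  ext i j
  simp [Matrix.mul_apply, Matrix.vecMulVec_apply, Matrix.vecMul, dotProduct,
    Finset.mul_sum, mul_assoc]

lemma CLaux.vecMulVec_mulVec (v w x : Fin n → F) :
    vecMulVec v w *ᵥ x = (w ⬝ᵥ x) • v := by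
  ext i
  simp only [Matrix.mulVec, dotProduct, Matrix.vecMulVec_apply, Pi.smul_apply,
    smul_eq_mul, Finset.sum_mul]
  exact Finset.sum_congr rfl fun j _ => by ring

lemma CLaux.vecMul_vecMulVec (y v w : Fin n → F) :
    y ᵥ* vecMulVec v w = (y ⬝ᵥ v) • w := by
  ext j
  simp only [Matrix.vecMul, dotProduct, Matrix.vecMulVec_apply, Pi.smul_apply,
    smul_eq_mul, Finset.sum_mul]
  exact Finset.sum_congr rfl fun i _ => by ring

lemma CLaux.vecMulVec_zero_left (w : Fin n → F) : vecMulVec (0 : Fin n → F) w = 0 := by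
  ext i j; simp [Matrix.vecMulVec_apply]

lemma CLaux.vecMulVec_zero_right (v : Fin n → F) : vecMulVec v (0 : Fin n → F) = 0 := by
  ext i j; simp [Matrix.vecMulVec_apply]

lemma CLaux.sum_mulVec {s : Finset ℕ} (M : ℕ → Matrix (Fin n) (Fin n) F) (x : Fin n → F) :
    (∑ i ∈ s, M i) *ᵥ x = ∑ i ∈ s, M i *ᵥ x := by
  ext j
  simp [Matrix.mulVec, dotProduct, Matrix.sum_apply, Finset.sum_mul]
  rw [Finset.sum_comm]

lemma CLaux.vecMul_sum {s : Finset ℕ} (M : ℕ → Matrix (Fin n) (Fin n) F) (x : Fin n → F) :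
    x ᵥ* (∑ i ∈ s, M i) = ∑ i ∈ s, x ᵥ* M i := by
  ext j
  simp [Matrix.vecMul, dotProduct, Matrix.sum_apply, Finset.mul_sum]
  rw [Finset.sum_comm]

lemma CLaux.smul_mulVec (c : F) (M : Matrix (Fin n) (Fin n) F) (x : Fin n → F) :
    (c • M) *ᵥ x = c • (M *ᵥ x) :=
  Matrix.smul_mulVec c M x

lemma CLaux.vecMul_smulM (c : F) (M : Matrix (Fin n) (Fin n) F) (x : Fin n → F) :
    x ᵥ* (c • M) = c • (x ᵥ* M) := by
  ext j
  simp [Matrix.vecMul, dotProduct, Finset.mul_sum, mul_assoc, mul_left_comm]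

lemma CLaux.dual_eq_dot (ψ : Module.Dual F (Fin n → F)) (x : Fin n → F) :
    ψ x = (fun i => ψ (Pi.single i 1)) ⬝ᵥ x := by
  conv_lhs => rw [← Finset.univ_sum_single x]
  rw [map_sum, dotProduct]
  refine Finset.sum_congr rfl fun i _ => ?_
  have : Pi.single i (x i) = x i • (Pi.single i (1 : F) : Fin n → F) := by
    ext j; by_cases hj : j = i <;> simp [Pi.single_apply, hj]
  rw [this, _root_.map_smul, smul_eq_mul, mul_comm]

/-- If `y` is annihilated by every vector in the left kernel of `A`, then `y` is in the
column space of `A`. -/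
lemma CLaux.exists_mulVec_of_dual (A : Matrix (Fin n) (Fin n) F) (y : Fin n → F)
    (hy : ∀ w, w ᵥ* A = 0 → w ⬝ᵥ y = 0) : ∃ x, A *ᵥ x = y := by
  by_contra hx
  push_neg at hx
  have hy' : y ∉ LinearMap.range A.mulVecLin := by
    simpa [Matrix.mulVecLin_apply] using fun x => hx x
  set p := LinearMap.range A.mulVecLin with hp
  have hq : (Submodule.Quotient.mk y : (Fin n → F) ⧸ p) ≠ 0 := by
    simpa [Submodule.Quotient.mk_eq_zero] using hy'
  have hnall : ¬ (∀ φ : Module.Dual F ((Fin n → F) ⧸ p), φ (Submodule.Quotient.mk y) = 0) := by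
    rw [Module.forall_dual_apply_eq_zero_iff]; exact hq
  push_neg at hnall
  obtain ⟨φ, hφ⟩ := hnall
  set ψ : Module.Dual F (Fin n → F) := φ.comp p.mkQ with hψ
  set w : Fin n → F := fun i => ψ (Pi.single i 1) with hw
  have hψ0 : ∀ z ∈ p, ψ z = 0 := by
    intro z hz
    simp only [hψ, LinearMap.comp_apply, Submodule.mkQ_apply]
    rw [(Submodule.Quotient.mk_eq_zero p).mpr hz, map_zero]
  have hwA : w ᵥ* A = 0 := by
    ext j
    have hcol : (w ᵥ* A) j = ψ (A *ᵥ Pi.single j 1) := by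
      rw [CLaux.dual_eq_dot ψ, ← hw]
      simp [Matrix.vecMul, Matrix.mulVec, dotProduct, Pi.single_apply, mul_comm]
    rw [hcol]
    simp only [Pi.zero_apply]
    exact hψ0 _ ⟨Pi.single j 1, rfl⟩
  have hyw := hy w hwA
  rw [← CLaux.dual_eq_dot ψ y] at hyw
  exact hφ (by simpa [hψ] using hyw)

lemma CLaux.mulVecLin_pow (A : Matrix (Fin n) (Fin n) F) (k : ℕ) :
    (A ^ k).mulVecLin = A.mulVecLin ^ k := by
  induction k with
  | zero => rw [pow_zero, pow_zero, Matrix.mulVecLin_one]; rfl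
  | succ k ih => rw [pow_succ, Matrix.mulVecLin_mul, ih, pow_succ]; rfl

/-- Fitting-style lemma: a kernel vector lying in every power's range is zero. -/
lemma CLaux.fitting (A : Matrix (Fin n) (Fin n) F) (v : Fin n → F) (hv : A *ᵥ v = 0)
    (hall : ∀ k, ∃ u, A ^ k *ᵥ u = v) : v = 0 := by
  obtain ⟨m, hm⟩ := Filter.eventually_atTop.mp
    (Module.End.eventually_disjoint_ker_pow_range_pow A.mulVecLin)
  have hdis := hm (m + 1) (Nat.le_succ m)
  have hker : v ∈ LinearMap.ker (A.mulVecLin ^ (m + 1)) := by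
    rw [← CLaux.mulVecLin_pow]
    simp only [LinearMap.mem_ker, Matrix.mulVecLin_apply]
    rw [pow_succ, ← Matrix.mulVec_mulVec, hv, Matrix.mulVec_zero]
  have hran : v ∈ LinearMap.range (A.mulVecLin ^ (m + 1)) := by
    obtain ⟨u, hu⟩ := hall (m + 1)
    exact ⟨u, by rw [← CLaux.mulVecLin_pow]; simpa using hu⟩
  exact Submodule.disjoint_def.mp hdis v hker hran

lemma CLaux.mem_clifforder_transpose {A X : Matrix (Fin n) (Fin n) F} :
    X ∈ clifforder Aᵀ ↔ Xᵀ ∈ clifforder A := by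
  unfold clifforder
  simp only [Set.mem_setOf_eq]
  constructor
  · intro hx
    have e := congrArg Matrix.transpose hx
    simp only [Matrix.transpose_mul, Matrix.transpose_neg, Matrix.transpose_transpose] at e
    rw [e, neg_neg]
  · intro hx
    have e := congrArg Matrix.transpose hx
    simp only [Matrix.transpose_mul, Matrix.transpose_neg, Matrix.transpose_transpose] at e
    rw [e, neg_neg]

/-- Key lemma: if `clifforder A = clifforder B`, `det A = 0` but `B` is invertible, then
every member of the clifforder annihilates the kernel of `A`. -/
lemma CLaux.kills {F : Type*} [Field F] [CharZero F] {n : ℕ}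
    (A B : Matrix (Fin n) (Fin n) F)
    (h : clifforder A = clifforder B) (hA : A.det = 0) (hB : B.det ≠ 0) :
    ∀ X ∈ clifforder A, ∀ v, A *ᵥ v = 0 → X *ᵥ v = 0 := by
  obtain ⟨w, hw0, hwA⟩ := Matrix.exists_vecMul_eq_zero_iff.mpr hA
  obtain ⟨j, hj⟩ : ∃ j, w j ≠ 0 := Function.ne_iff.mp hw0
  -- every kernel vector of A is an eigenvector of B
  have claim1 : ∀ v, A *ᵥ v = 0 → ∃ c : F, B *ᵥ v = c • v := by
    intro v hv
    have hX : vecMulVec v w ∈ clifforder A := by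
      show A * vecMulVec v w = -(vecMulVec v w * A)
      rw [CLaux.mul_vecMulVec, CLaux.vecMulVec_mul, hv, hwA,
        CLaux.vecMulVec_zero_left, CLaux.vecMulVec_zero_right, neg_zero]
    rw [h] at hX
    have hX' : B * vecMulVec v w = -(vecMulVec v w * B) := hX
    rw [CLaux.mul_vecMulVec, CLaux.vecMulVec_mul] at hX'
    refine ⟨-((w ᵥ* B) j) / w j, ?_⟩
    ext i
    have e := congrFun (congrFun hX' i) j
    simp only [Matrix.vecMulVec_apply, Matrix.neg_apply] at e
    simp only [Pi.smul_apply, smul_eq_mul]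
    field_simp
    linear_combination e
  obtain ⟨v₀, hv₀0, hv₀⟩ := Matrix.exists_mulVec_eq_zero_iff.mpr hA
  obtain ⟨c₀, hc₀⟩ := claim1 v₀ hv₀
  have hc₀0 : c₀ ≠ 0 := by
    intro hc
    rw [hc, zero_smul] at hc₀
    exact hB (Matrix.exists_mulVec_eq_zero_iff.mp ⟨v₀, hv₀0, hc₀⟩)
  -- the eigenvalue is the same for all kernel vectors
  have claim2 : ∀ v, A *ᵥ v = 0 → B *ᵥ v = c₀ • v := by
    intro v hv
    obtain ⟨c, hc⟩ := claim1 v hv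
    rcases eq_or_ne v 0 with rfl | hvne
    · simp
    obtain ⟨c', hc'⟩ := claim1 (v + v₀) (by rw [Matrix.mulVec_add, hv, hv₀, add_zero])
    rw [Matrix.mulVec_add, hc, hc₀, smul_add] at hc'
    have key : (c - c') • v = (c' - c₀) • v₀ := by
      ext i
      have e := congrFun hc' i
      simp only [Pi.add_apply, Pi.smul_apply, Pi.sub_apply, smul_eq_mul, sub_smul] at e ⊢
      linear_combination e
    by_cases hcc : c = c'
    · rw [hcc, sub_self, zero_smul] at key
      rcases smul_eq_zero.mp key.symm with h0 | h0
      · rw [hc, hcc, sub_eq_zero.mp h0]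
      · exact absurd h0 hv₀0
    · have hccne : c - c' ≠ 0 := sub_ne_zero.mpr hcc
      set t : F := (c - c')⁻¹ * (c' - c₀) with ht
      have hveq : v = t • v₀ := by
        have e5 := congrArg (fun z => (c - c')⁻¹ • z) key
        simpa [smul_smul, inv_mul_cancel₀ hccne] using e5
      have htne : t ≠ 0 := fun h0 => hvne (by rw [hveq, h0, zero_smul])
      have e1 : B *ᵥ v = (t * c₀) • v₀ := by
        rw [hveq, Matrix.mulVec_smul, hc₀, smul_smul]
      have e2 : B *ᵥ v = (c * t) • v₀ := by
        rw [hc, hveq, smul_smul]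
      have hcc₀ : c = c₀ := by
        have e3 : (t * c₀ - c * t) • v₀ = 0 := by
          rw [sub_smul, ← e1, ← e2, sub_self]
        have e4 : t * c₀ - c * t = 0 := by
          rcases smul_eq_zero.mp e3 with h0 | h0
          · exact h0
          · exact absurd h0 hv₀0
        have h5 : t * (c₀ - c) = 0 := by linear_combination e4
        rcases mul_eq_zero.mp h5 with h' | h'
        · exact absurd h' htne
        · exact (sub_eq_zero.mp h').symm
      rw [hc, hcc₀]
  -- finally: members of the clifforder kill the kernel
  intro X hX v hv
  have hXA : A * X = -(X * A) := hX
  have hXB : B * X = -(X * B) := by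
    have hx2 := hX; rw [h] at hx2; exact hx2
  have hXv_ker : A *ᵥ (X *ᵥ v) = 0 := by
    rw [Matrix.mulVec_mulVec, hXA, Matrix.neg_mulVec, ← Matrix.mulVec_mulVec, hv,
      Matrix.mulVec_zero, neg_zero]
  have e1 : B *ᵥ (X *ᵥ v) = c₀ • (X *ᵥ v) := claim2 _ hXv_ker
  have e2 : B *ᵥ (X *ᵥ v) = -(c₀ • (X *ᵥ v)) := by
    rw [Matrix.mulVec_mulVec, hXB, Matrix.neg_mulVec, ← Matrix.mulVec_mulVec, claim2 v hv,
      Matrix.mulVec_smul]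
  have e3 : (2 * c₀) • (X *ᵥ v) = 0 := by
    have := e1.symm.trans e2
    rw [two_mul, add_smul]
    rw [eq_neg_iff_add_eq_zero] at this
    exact this
  rcases smul_eq_zero.mp e3 with h0 | h0
  · exact absurd h0 (mul_ne_zero two_ne_zero hc₀0)
  · exact h0

end helpers

theorem det_eq_zero_of_clifforder_eq {n : ℕ} {F : Type*} [Field F] [CharZero F]
    (A B : Matrix (Fin n) (Fin n) F)
    (h : clifforder A = clifforder B) (hA : A.det = 0) :
    B.det = 0 := by
  by_contra hB
  have hT : clifforder Aᵀ = clifforder Bᵀ := by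
    ext X
    rw [CLaux.mem_clifforder_transpose, CLaux.mem_clifforder_transpose, h]
  have hAT : Aᵀ.det = 0 := by rwa [Matrix.det_transpose]
  have hBT : Bᵀ.det ≠ 0 := by rwa [Matrix.det_transpose]
  have killsR := CLaux.kills A B h hA hB
  have killsLT := CLaux.kills Aᵀ Bᵀ hT hAT hBT
  have killsL : ∀ X ∈ clifforder A, ∀ w', w' ᵥ* A = 0 → w' ᵥ* X = 0 := by
    intro X hX w' hw'
    have hXT : Xᵀ ∈ clifforder Aᵀ := by
      rw [CLaux.mem_clifforder_transpose, Matrix.transpose_transpose]; exact hX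
    have hres := killsLT Xᵀ hXT w' (by rwa [Matrix.mulVec_transpose])
    rwa [Matrix.mulVec_transpose] at hres
  obtain ⟨v, hv0, hv⟩ := Matrix.exists_mulVec_eq_zero_iff.mpr hA
  obtain ⟨w, hw0, hw⟩ := Matrix.exists_vecMul_eq_zero_iff.mpr hA
  have chain : ∀ k : ℕ, (∃ u, A ^ k *ᵥ u = v) ∧ (∃ w', w' ᵥ* A ^ k = w) := by
    intro k
    induction k with
    | zero =>
      exact ⟨⟨v, by simp [Matrix.one_mulVec]⟩, ⟨w, by simp [Matrix.vecMul_one]⟩⟩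
    | succ k ih =>
      obtain ⟨⟨u, hu⟩, ⟨w', hw'⟩⟩ := ih
      set a : ℕ → (Fin n → F) := fun i => A ^ i *ᵥ u with ha
      set b : ℕ → (Fin n → F) := fun i => w' ᵥ* A ^ i with hb
      have haS : ∀ i, A *ᵥ a i = a (i + 1) := by
        intro i
        show A *ᵥ (A ^ i *ᵥ u) = A ^ (i+1) *ᵥ u
        rw [Matrix.mulVec_mulVec, ← pow_succ']
      have hbS : ∀ i, b i ᵥ* A = b (i + 1) := by
        intro i
        show (w' ᵥ* A ^ i) ᵥ* A = w' ᵥ* A ^ (i+1)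
        rw [Matrix.vecMul_vecMul, ← pow_succ]
      have hak : a k = v := hu
      have hbk : b k = w := hw'
      have ha0 : a 0 = u := by show A ^ 0 *ᵥ u = u; simp [Matrix.one_mulVec]
      have hb0 : b 0 = w' := by show w' ᵥ* A ^ 0 = w'; simp [Matrix.vecMul_one]
      have ha1 : a (k+1) = 0 := by rw [← haS, hak, hv]
      have hb1 : b (k+1) = 0 := by rw [← hbS, hbk, hw]
      set Xk : Matrix (Fin n) (Fin n) F :=
        ∑ i ∈ Finset.range (k+1), (-1:F)^i • vecMulVec (a i) (b (k - i)) with hXk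
      have hXkCL : Xk ∈ clifforder A := by
        show A * Xk = -(Xk * A)
        have hL : A * Xk = ∑ i ∈ Finset.range (k+1),
            (-1:F)^i • vecMulVec (a (i+1)) (b (k - i)) := by
          rw [hXk, Finset.mul_sum]
          refine Finset.sum_congr rfl fun i _ => ?_
          rw [Matrix.mul_smul, CLaux.mul_vecMulVec, haS]
        have hR : Xk * A = ∑ i ∈ Finset.range (k+1),
            (-1:F)^i • vecMulVec (a i) (b (k - i + 1)) := by
          rw [hXk, Finset.sum_mul]
          refine Finset.sum_congr rfl fun i _ => ?_
          rw [Matrix.smul_mul, CLaux.vecMulVec_mul, hbS]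
        have e1 : ∑ i ∈ Finset.range (k+1), (-1:F)^i • vecMulVec (a (i+1)) (b (k - i))
            = ∑ i ∈ Finset.range k, (-1:F)^i • vecMulVec (a (i+1)) (b (k - i)) := by
          rw [Finset.sum_range_succ, ha1, CLaux.vecMulVec_zero_left, smul_zero, add_zero]
        have e2 : ∑ i ∈ Finset.range (k+1), (-1:F)^i • vecMulVec (a i) (b (k - i + 1))
            = (∑ i ∈ Finset.range k, (-1:F)^(i+1) • vecMulVec (a (i+1)) (b (k - (i+1) + 1)))
              + (-1:F)^0 • vecMulVec (a 0) (b (k - 0 + 1)) :=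
          Finset.sum_range_succ' _ k
        have e3 : ∀ i ∈ Finset.range k, (-1:F)^(i+1) • vecMulVec (a (i+1)) (b (k - (i+1) + 1))
            = -((-1:F)^i • vecMulVec (a (i+1)) (b (k - i))) := by
          intro i hi
          have hik : i < k := Finset.mem_range.mp hi
          have hnat : k - (i+1) + 1 = k - i := by omega
          rw [hnat, pow_succ, mul_neg_one, neg_smul]
        rw [hL, hR, e1, e2, Finset.sum_congr rfl e3]
        simp [Nat.sub_zero, hb1, CLaux.vecMulVec_zero_right]
      have hu_dual : ∀ w'', w'' ᵥ* A = 0 → w'' ⬝ᵥ u = 0 := by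
        intro w'' hw''
        have hzero : w'' ᵥ* Xk = 0 := killsL Xk hXkCL w'' hw''
        have hexp : w'' ᵥ* Xk = ∑ i ∈ Finset.range (k+1),
            (-1:F)^i • ((w'' ⬝ᵥ a i) • b (k - i)) := by
          rw [hXk, CLaux.vecMul_sum]
          refine Finset.sum_congr rfl fun i _ => ?_
          rw [CLaux.vecMul_smulM, CLaux.vecMul_vecMulVec]
        have hterm : ∀ i ∈ Finset.range k,
            (-1:F)^(i+1) • ((w'' ⬝ᵥ a (i+1)) • b (k - (i+1))) = 0 := by
          intro i _
          have hdot : w'' ⬝ᵥ a (i+1) = 0 := by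
            rw [← haS i, Matrix.dotProduct_mulVec, hw'', zero_dotProduct]
          rw [hdot, zero_smul, smul_zero]
        rw [hexp, Finset.sum_range_succ', Finset.sum_eq_zero hterm, zero_add,
          pow_zero, one_smul, Nat.sub_zero, ha0, hbk] at hzero
        rcases smul_eq_zero.mp hzero with h0 | h0
        · exact h0
        · exact absurd h0 hw0
      obtain ⟨x, hx⟩ := CLaux.exists_mulVec_of_dual A u hu_dual
      have hu' : A ^ (k+1) *ᵥ x = v := by
        rw [pow_succ, ← Matrix.mulVec_mulVec, hx, hu]
      have hw_dual : ∀ v'', A *ᵥ v'' = 0 → w' ⬝ᵥ v'' = 0 := by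
        intro v'' hv''
        have hzero : Xk *ᵥ v'' = 0 := killsR Xk hXkCL v'' hv''
        have hexp : Xk *ᵥ v'' = ∑ i ∈ Finset.range (k+1),
            (-1:F)^i • ((b (k - i) ⬝ᵥ v'') • a i) := by
          rw [hXk, CLaux.sum_mulVec]
          refine Finset.sum_congr rfl fun i _ => ?_
          rw [CLaux.smul_mulVec, CLaux.vecMulVec_mulVec]
        have hpow0 : ∀ m : ℕ, A ^ (m + 1) *ᵥ v'' = 0 := by
          intro m
          rw [pow_succ, ← Matrix.mulVec_mulVec, hv'', Matrix.mulVec_zero]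
        have hterm : ∀ i ∈ Finset.range k, (-1:F)^i • ((b (k - i) ⬝ᵥ v'') • a i) = 0 := by
          intro i hi
          have hik : i < k := Finset.mem_range.mp hi
          have hdot : b (k - i) ⬝ᵥ v'' = 0 := by
            show (w' ᵥ* A ^ (k - i)) ⬝ᵥ v'' = 0
            obtain ⟨p, hp⟩ : ∃ p, k - i = p + 1 := ⟨k - i - 1, by omega⟩
            rw [hp, ← Matrix.dotProduct_mulVec, hpow0, dotProduct_zero]
          rw [hdot, zero_smul, smul_zero]
        rw [hexp, Finset.sum_range_succ, Finset.sum_eq_zero hterm, zero_add,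
          Nat.sub_self, hb0, hak] at hzero
        rcases smul_eq_zero.mp hzero with h0 | h0
        · exact absurd h0 (pow_ne_zero k (by norm_num))
        · rcases smul_eq_zero.mp h0 with h1 | h1
          · exact h1
          · exact absurd h1 hv0
      obtain ⟨z, hz⟩ := CLaux.exists_mulVec_of_dual Aᵀ w'
        (fun om hom => by
          rw [dotProduct_comm]
          exact hw_dual om (by rwa [Matrix.vecMul_transpose] at hom))
      have hz' : z ᵥ* A = w' := by rwa [Matrix.mulVec_transpose] at hz
      have hw'' : z ᵥ* A ^ (k+1) = w := by
        rw [pow_succ', ← Matrix.vecMul_vecMul, hz', hw']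
      exact ⟨⟨x, hu'⟩, ⟨z, hw''⟩⟩
  exact hv0 (CLaux.fitting A v hv (fun k => (chain k).1))
end

section
/- Let F be a field of characteristic zero, let A = Jₙ(0), let B ∈ Mₙ(F), and let k ≥ 2 be an integer. If every X ∈ Mₙ(F) satisfying Σ_{i=0}^{k} C(k,i) A^{k−i} X A^{i} = 0 also satisfies Σ_{i=0}^{k} C(k,i) X^{k−i} B X^{i} = 0, then B = 0. -/
def jordanBlock (n : ℕ) (F : Type*) [Field F] : Matrix (Fin n) (Fin n) F :=
  Matrix.of fun i j => if (i : ℕ) + 1 = (j : ℕ) then 1 else 0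

lemma jordanBlock_pow {n : ℕ} {F : Type*} [Field F] (m : ℕ) (i j : Fin n) :
    (jordanBlock n F ^ m) i j = if (i : ℕ) + m = (j : ℕ) then 1 else 0 := by
  induction m generalizing j with
  | zero => simp [Matrix.one_apply, Fin.ext_iff]
  | succ m ih =>
    rw [pow_succ, Matrix.mul_apply]
    by_cases h : (i : ℕ) + m + 1 = (j : ℕ)
    · have hc : (i : ℕ) + m < n := by omega
      rw [if_pos (show (i : ℕ) + (m + 1) = (j : ℕ) by omega),
        Finset.sum_eq_single (⟨(i:ℕ)+m, hc⟩ : Fin n)]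
      · rw [ih, if_pos rfl, jordanBlock]
        simp [h]
      · intro b _ hb
        rw [ih]
        split
        · next hb' => exact absurd (Fin.ext hb'.symm) hb
        · exact zero_mul _
      · simp
    · rw [if_neg (show ¬ (i : ℕ) + (m + 1) = (j : ℕ) by omega)]
      apply Finset.sum_eq_zero
      intro c _
      rw [ih]
      split
      · next hc =>
        rw [jordanBlock]
        simp only [Matrix.of_apply]
        rw [if_neg (by omega), mul_zero]
      · exact zero_mul _

lemma sandwich_entry {n : ℕ} {F : Type*} [Field F] (d : Fin n → F) (m p : ℕ) (a b : Fin n) :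
    (jordanBlock n F ^ m * Matrix.diagonal d * jordanBlock n F ^ p) a b =
      if h : (a : ℕ) + m + p = (b : ℕ) then d ⟨(a : ℕ) + m, by omega⟩ else 0 := by
  rw [Matrix.mul_apply]
  by_cases h : (a : ℕ) + m + p = (b : ℕ)
  · have hc : (a : ℕ) + m < n := by omega
    rw [dif_pos h, Finset.sum_eq_single (⟨(a:ℕ)+m, hc⟩ : Fin n)]
    · rw [Matrix.mul_diagonal, jordanBlock_pow, jordanBlock_pow]
      simp [h]
    · intro c _ hc'
      rw [Matrix.mul_diagonal, jordanBlock_pow]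
      split
      · next hc'' => exact absurd (Fin.ext hc''.symm) hc'
      · simp
    · simp
  · rw [dif_neg h]
    apply Finset.sum_eq_zero
    intro c _
    rw [Matrix.mul_diagonal, jordanBlock_pow, jordanBlock_pow]
    split
    · next hc => rw [if_neg (by omega)]; ring
    · simp

lemma alt_sum_one {F : Type*} [Field F] [CharZero F] {k : ℕ} (hk : 1 ≤ k) :
    ∑ i ∈ Finset.range (k + 1), (k.choose i : F) * (-1) ^ i = 0 := by
  have h1 := Int.alternating_sum_range_choose (n := k)
  rw [if_neg (by omega)] at h1
  have h2 : ((∑ m ∈ Finset.range (k + 1), ((-1) ^ m * (k.choose m : ℤ)) : ℤ) : F) = 0 := by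
    rw [h1]; norm_num
  push_cast at h2
  rw [← h2]
  exact Finset.sum_congr rfl fun i _ => by ring

lemma alt_sum_i {F : Type*} [Field F] [CharZero F] {k : ℕ} (hk : 2 ≤ k) :
    ∑ i ∈ Finset.range (k + 1), (k.choose i : F) * (-1) ^ i * i = 0 := by
  have hZ : ∑ i ∈ Finset.range (k + 1), ((-1) ^ i * (k.choose i : ℤ) * i) = 0 := by
    rw [Finset.sum_range_succ' (fun i => ((-1) ^ i * (k.choose i : ℤ) * i)) k]
    simp only [Nat.cast_zero, mul_zero, add_zero]
    have key : ∀ j ∈ Finset.range k,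
        ((-1 : ℤ) ^ (j+1) * (k.choose (j+1) : ℤ) * ((j+1 : ℕ) : ℤ))
          = (-(k:ℤ)) * ((-1) ^ j * ((k-1).choose j : ℤ)) := by
      intro j _
      have hnat : k * (k-1).choose j = k.choose (j+1) * (j+1) := by
        have h1 : k - 1 + 1 = k := by omega
        have := Nat.add_one_mul_choose_eq (k-1) j
        simpa [Nat.succ_eq_add_one, h1] using this
      have hZ' : (k : ℤ) * ((k-1).choose j : ℤ) = (k.choose (j+1) : ℤ) * ((j:ℤ)+1) := by
        exact_mod_cast hnat
      push_cast
      rw [pow_succ]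
      linear_combination ((-1:ℤ)^j) * hZ'
    have hrange : Finset.range k = Finset.range ((k-1) + 1) := by congr 1; omega
    rw [Finset.sum_congr rfl key, ← Finset.mul_sum, hrange,
      Int.alternating_sum_range_choose, if_neg (by omega), mul_zero]
  have h2 : ((∑ i ∈ Finset.range (k + 1), ((-1) ^ i * (k.choose i : ℤ) * i) : ℤ) : F) = 0 := by
    rw [hZ]; norm_num
  push_cast at h2
  rw [← h2]
  exact Finset.sum_congr rfl fun i _ => by ring

theorem eq_zero_of_binomial_relation {n : ℕ} {F : Type*} [Field F] [CharZero F]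
    (B : Matrix (Fin n) (Fin n) F) (k : ℕ) (hk : 2 ≤ k)
    (h : ∀ X : Matrix (Fin n) (Fin n) F,
      (∑ i ∈ Finset.range (k + 1),
        (k.choose i : F) • ((jordanBlock n F) ^ (k - i) * X * (jordanBlock n F) ^ i)) = 0 →
      (∑ i ∈ Finset.range (k + 1), (k.choose i : F) • (X ^ (k - i) * B * X ^ i)) = 0) :
    B = 0 := by
  set d : Fin n → F := fun i => (-1) ^ (i : ℕ) * ((i : ℕ) + 2⁻¹) with hd
  set X : Matrix (Fin n) (Fin n) F := Matrix.diagonal d with hX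
  have hyp : (∑ i ∈ Finset.range (k + 1),
      (k.choose i : F) • ((jordanBlock n F) ^ (k - i) * X * (jordanBlock n F) ^ i)) = 0 := by
    ext a b
    simp only [Matrix.sum_apply, Matrix.smul_apply, Matrix.zero_apply, smul_eq_mul, hX]
    by_cases hab : (a : ℕ) + k = (b : ℕ)
    · have step : ∀ i ∈ Finset.range (k + 1),
          (k.choose i : F) * (jordanBlock n F ^ (k - i) * Matrix.diagonal d *
            jordanBlock n F ^ i) a b
          = (-1) ^ ((a:ℕ) + k) * ((k.choose i : F) * (-1) ^ i * (((a:ℕ) : F) + k + 2⁻¹ - i)) := by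
        intro i hi
        rw [Finset.mem_range] at hi
        have hik : i ≤ k := by omega
        have hcond : (a : ℕ) + (k - i) + i = (b : ℕ) := by omega
        rw [sandwich_entry, dif_pos hcond, hd]
        simp only
        have h1 : (-1 : F) ^ ((a:ℕ) + (k - i)) * (-1) ^ i = (-1) ^ ((a:ℕ) + k) := by
          rw [← pow_add]; congr 1; omega
        have h3 : (-1 : F) ^ ((a:ℕ) + (k-i)) = (-1) ^ ((a:ℕ)+k) * (-1) ^ i := by
          have hsq : ((-1 : F) ^ i) * ((-1 : F) ^ i) = 1 := by
            rw [← pow_add, ← two_mul, pow_mul]; norm_num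
          calc (-1 : F) ^ ((a:ℕ) + (k-i)) = (-1) ^ ((a:ℕ) + (k-i)) * ((-1) ^ i * (-1) ^ i) := by
                rw [hsq, mul_one]
            _ = ((-1) ^ ((a:ℕ) + (k-i)) * (-1) ^ i) * (-1) ^ i := by ring
            _ = (-1) ^ ((a:ℕ)+k) * (-1) ^ i := by rw [h1]
        have h2 : (((a:ℕ) + (k - i) : ℕ) : F) = ((a:ℕ) : F) + k - i := by
          rw [Nat.cast_add, Nat.cast_sub hik]; ring
        rw [h3, h2]
        ring
      rw [Finset.sum_congr rfl step, ← Finset.mul_sum]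
      have hsum : ∑ i ∈ Finset.range (k+1),
          (k.choose i : F) * (-1) ^ i * (((a:ℕ):F) + k + 2⁻¹ - i)
          = (((a:ℕ):F) + k + 2⁻¹) * (∑ i ∈ Finset.range (k+1), (k.choose i : F) * (-1) ^ i)
            - ∑ i ∈ Finset.range (k+1), (k.choose i : F) * (-1) ^ i * i := by
        rw [Finset.mul_sum, ← Finset.sum_sub_distrib]
        exact Finset.sum_congr rfl fun i _ => by ring
      rw [hsum, alt_sum_one (by omega : 1 ≤ k), alt_sum_i hk]
      ring
    · apply Finset.sum_eq_zero
      intro i hi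
      rw [Finset.mem_range] at hi
      rw [sandwich_entry, dif_neg (by omega), mul_zero]
  have conc := h X hyp
  ext a b
  have entry := congrFun (congrFun conc a) b
  simp only [Matrix.sum_apply, Matrix.smul_apply, Matrix.zero_apply, smul_eq_mul, hX,
    Matrix.diagonal_pow, Matrix.diagonal_mul, Matrix.mul_diagonal, Pi.pow_apply] at entry
  have factored : (d b + d a) ^ k * B a b = 0 := by
    rw [add_pow, Finset.sum_mul, ← entry]
    exact Finset.sum_congr rfl fun i _ => by ring
  have hne : d b + d a ≠ 0 := by
    rw [hd]
    simp only
    rcases Nat.even_or_odd (a : ℕ) with ha | ha <;>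
      rcases Nat.even_or_odd (b : ℕ) with hb | hb
    · rw [ha.neg_one_pow, hb.neg_one_pow]
      intro hcon
      have hz : (((a:ℕ) + (b:ℕ) + 1 : ℕ) : F) = 0 := by
        push_cast
        linear_combination hcon
      exact Nat.cast_ne_zero.mpr (by omega : (a:ℕ) + (b:ℕ) + 1 ≠ 0) hz
    · rw [ha.neg_one_pow, hb.neg_one_pow]
      have hab : (a:ℕ) ≠ (b:ℕ) := fun e => by
        rw [e] at ha; exact (Nat.not_even_iff_odd.mpr hb) ha
      intro hcon
      have hz : ((a:ℕ) : F) = ((b:ℕ) : F) := by linear_combination hcon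
      exact hab (by exact_mod_cast hz)
    · rw [ha.neg_one_pow, hb.neg_one_pow]
      have hab : (a:ℕ) ≠ (b:ℕ) := fun e => by
        rw [e] at ha; exact (Nat.not_even_iff_odd.mpr ha) hb
      intro hcon
      have hz : ((a:ℕ) : F) = ((b:ℕ) : F) := by linear_combination -hcon
      exact hab (by exact_mod_cast hz)
    · rw [ha.neg_one_pow, hb.neg_one_pow]
      intro hcon
      have hz : (((a:ℕ) + (b:ℕ) + 1 : ℕ) : F) = 0 := by
        push_cast
        linear_combination -hcon
      exact Nat.cast_ne_zero.mpr (by omega : (a:ℕ) + (b:ℕ) + 1 ≠ 0) hz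
  have hpow := pow_ne_zero k hne
  simpa [Matrix.zero_apply] using (mul_eq_zero.mp factored).resolve_left hpow
end

section
/- Let F be a field of characteristic zero, let k ≥ 2 be an integer, and let A = Jₙ(0). If B ∈ Mₙ(F) satisfies Ker Ad_A^k = Ann_k(B), then B is a scalar matrix. -/
/-- The adjoint map `Ad_A : X ↦ AX - XA`. -/
def adFun {n : ℕ} {F : Type*} [Field F] (A : Matrix (Fin n) (Fin n) F) :
    Matrix (Fin n) (Fin n) F → Matrix (Fin n) (Fin n) F :=
  fun X => A * X - X * A

/-- The kernel of the `k`-fold composition of `Ad_A`. -/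
def kerAdPow {n : ℕ} {F : Type*} [Field F] (A : Matrix (Fin n) (Fin n) F) (k : ℕ) :
    Set (Matrix (Fin n) (Fin n) F) :=
  {X | (adFun A)^[k] X = 0}

/-- The `k`-th annihilator of `B`: all `X` with `Ad_X^k (B) = 0`. -/
def annPow {n : ℕ} {F : Type*} [Field F] (B : Matrix (Fin n) (Fin n) F) (k : ℕ) :
    Set (Matrix (Fin n) (Fin n) F) :=
  {X | (adFun X)^[k] B = 0}

section Aux

variable {n : ℕ} {F : Type*} [Field F]

lemma adFun_add (A X Y : Matrix (Fin n) (Fin n) F) :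
    adFun A (X + Y) = adFun A X + adFun A Y := by
  simp only [adFun, mul_add, add_mul]; abel

lemma adFun_smul (A : Matrix (Fin n) (Fin n) F) (c : F) (X : Matrix (Fin n) (Fin n) F) :
    adFun A (c • X) = c • adFun A X := by
  simp only [adFun, Matrix.mul_smul, Matrix.smul_mul, smul_sub]

lemma adFun_zero (A : Matrix (Fin n) (Fin n) F) : adFun A 0 = 0 := by
  simp [adFun]

lemma adFun_self (A : Matrix (Fin n) (Fin n) F) : adFun A A = 0 := sub_self _

lemma iterate_adFun_zero (A : Matrix (Fin n) (Fin n) F) (k : ℕ) :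
    (adFun A)^[k] 0 = 0 :=
  Function.iterate_fixed (adFun_zero A) k

lemma iterate_adFun_add (A : Matrix (Fin n) (Fin n) F) (k : ℕ)
    (X Y : Matrix (Fin n) (Fin n) F) :
    (adFun A)^[k] (X + Y) = (adFun A)^[k] X + (adFun A)^[k] Y := by
  induction k generalizing X Y with
  | zero => simp
  | succ k ih =>
    rw [Function.iterate_succ_apply, Function.iterate_succ_apply,
      Function.iterate_succ_apply, adFun_add, ih]

lemma iterate_adFun_smul (A : Matrix (Fin n) (Fin n) F) (k : ℕ) (c : F)
    (X : Matrix (Fin n) (Fin n) F) :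
    (adFun A)^[k] (c • X) = c • (adFun A)^[k] X := by
  induction k generalizing X with
  | zero => simp
  | succ k ih =>
    rw [Function.iterate_succ_apply, Function.iterate_succ_apply, adFun_smul, ih]

end Aux

theorem isScalar_of_kerAdPow_jordan_eq_annPow {n : ℕ} {F : Type*} [Field F] [CharZero F]
    (k : ℕ) (hk : 2 ≤ k) (B : Matrix (Fin n) (Fin n) F)
    (h : kerAdPow (jordanBlock n F) k = annPow B k) :
    ∃ c : F, B = c • (1 : Matrix (Fin n) (Fin n) F) := by
  obtain ⟨m₂, rfl⟩ : ∃ m, k = m + 2 := ⟨k - 2, by omega⟩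
  set k := m₂ + 2 with hkdef
  set A := jordanBlock n F with hA
  -- Step 1: D = diag(0,1,...,n-1) lies in Ker Ad_A^k
  set D : Matrix (Fin n) (Fin n) F := Matrix.diagonal (fun i => (i : F)) with hDdef
  have hAD : adFun A D = A := by
    ext i j
    simp only [adFun, Matrix.sub_apply, hDdef, hA, jordanBlock, Matrix.mul_diagonal,
      Matrix.diagonal_mul, Matrix.of_apply]
    by_cases hij : (i : ℕ) + 1 = (j : ℕ)
    · have hj : (j : F) = (i : F) + 1 := by exact_mod_cast congrArg (Nat.cast : ℕ → F) hij.symm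
      rw [if_pos hij, hj]; ring
    · rw [if_neg hij]; ring
  have hDk : (adFun A)^[k] D = 0 := by
    have h2 : (adFun A)^[2] D = 0 := by
      show adFun A (adFun A D) = 0
      rw [hAD, adFun_self]
    rw [hkdef, Function.iterate_add_apply, h2, iterate_adFun_zero]
  -- hence D ∈ annPow B k
  have hDB : (adFun D)^[k] B = 0 := by
    have : D ∈ kerAdPow A k := hDk
    rw [h] at this
    exact this
  -- entrywise formula for Ad_D powers
  have hentry : ∀ m : ℕ, ∀ i j : Fin n, ((adFun D)^[m] B) i j = ((i : F) - (j : F)) ^ m * B i j := by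
    intro m
    induction m with
    | zero => simp
    | succ m ih =>
      intro i j
      rw [Function.iterate_succ_apply']
      simp only [adFun, Matrix.sub_apply, Matrix.diagonal_mul, Matrix.mul_diagonal, hDdef]
      rw [ih i j]
      ring
  -- B is diagonal
  have hoff : ∀ i j : Fin n, i ≠ j → B i j = 0 := by
    intro i j hij
    have h0 : ((i : F) - (j : F)) ^ k * B i j = 0 := by
      rw [← hentry k i j, hDB]; rfl
    have hne : (i : F) - (j : F) ≠ 0 := by
      have : (i : ℕ) ≠ (j : ℕ) := fun hh => hij (Fin.ext hh)
      have : (i : F) ≠ (j : F) := fun hh => this (Nat.cast_injective hh)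
      exact sub_ne_zero.mpr this
    have := mul_eq_zero.mp h0
    rcases this with h' | h'
    · exact absurd h' (pow_ne_zero _ hne)
    · exact h'
  set b : Fin n → F := fun i => B i i with hbdef
  have hBdiag : B = Matrix.diagonal b := by
    ext i j
    by_cases hij : i = j
    · subst hij; simp [Matrix.diagonal, hbdef]
    · simp [Matrix.diagonal_apply_ne _ hij, hoff i j hij]
  -- Step 2: for p ≠ q, E_pq ∈ annPow B k, hence ∈ Ker Ad_A^k
  have hEmem : ∀ p q : Fin n, p ≠ q →
      (Matrix.single p q (1 : F)) ∈ kerAdPow A k := by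
    intro p q hpq
    rw [h]
    show (adFun (Matrix.single p q (1 : F)))^[k] B = 0
    set E := Matrix.single p q (1 : F) with hEdef
    have h1 : adFun E B = (b q - b p) • E := by
      rw [hBdiag]
      ext i j
      simp only [adFun, Matrix.sub_apply, Matrix.mul_diagonal, Matrix.diagonal_mul,
        Matrix.smul_apply, smul_eq_mul, hEdef]
      by_cases h1 : i = p <;> by_cases h2 : j = q
      · subst h1; subst h2
        rw [Matrix.single_apply_same]; ring
      · rw [Matrix.single_apply_of_ne p q 1 i j (fun hh => h2 hh.2.symm)]; ring
      · rw [Matrix.single_apply_of_ne p q 1 i j (fun hh => h1 hh.1.symm)]; ring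
      · rw [Matrix.single_apply_of_ne p q 1 i j (fun hh => h1 hh.1.symm)]; ring
    have h2 : (adFun E)^[2] B = 0 := by
      show adFun E (adFun E B) = 0
      rw [h1, adFun_smul, adFun_self, smul_zero]
    rw [hkdef, Function.iterate_add_apply, h2, iterate_adFun_zero]
  -- Step 3: all diagonal entries of B are equal
  have hbeq : ∀ p q : Fin n, b p = b q := by
    intro p q
    by_cases hpq : p = q
    · rw [hpq]
    · -- X = E_pq + E_qp ∈ Ker Ad_A^k, hence ∈ annPow B k
      set E₁ := Matrix.single p q (1 : F) with hE1
      set E₂ := Matrix.single q p (1 : F) with hE2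
      set X := E₁ + E₂ with hX
      have hXker : X ∈ kerAdPow A k := by
        show (adFun A)^[k] X = 0
        rw [hX, iterate_adFun_add]
        rw [hEmem p q hpq, hEmem q p (Ne.symm hpq), add_zero]
      have hXann : (adFun X)^[k] B = 0 := by rw [h] at hXker; exact hXker
      set S := E₁ - E₂ with hS
      set T := Matrix.single q q (1 : F) - Matrix.single p p (1 : F) with hT
      have hgB : adFun X B = (b q - b p) • S := by
        rw [hBdiag]
        ext i j
        simp only [adFun, Matrix.sub_apply, Matrix.mul_diagonal, Matrix.diagonal_mul,
          Matrix.smul_apply, Matrix.add_apply, hX, hS, hE1, hE2, smul_eq_mul]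
        by_cases c1 : i = p ∧ j = q
        · obtain ⟨rfl, rfl⟩ := c1
          rw [Matrix.single_apply_same,
            Matrix.single_apply_of_ne _ _ _ _ _ (fun hh => hpq hh.1.symm)]
          ring
        · by_cases c2 : i = q ∧ j = p
          · obtain ⟨rfl, rfl⟩ := c2
            rw [Matrix.single_apply_same,
              Matrix.single_apply_of_ne _ _ _ _ _ (fun hh => hpq hh.1)]
            ring
          · rw [Matrix.single_apply_of_ne p q 1 i j
                (fun hh => c1 ⟨hh.1.symm, hh.2.symm⟩),
              Matrix.single_apply_of_ne q p 1 i j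
                (fun hh => c2 ⟨hh.1.symm, hh.2.symm⟩)]
            ring
      have hgS : adFun X S = (2 : F) • T := by
        rw [hX, hS, hT, hE1, hE2]
        simp only [adFun, mul_sub, sub_mul, add_mul, mul_add,
          Matrix.single_mul_single_same, Matrix.single_mul_single_of_ne (h := hpq),
          Matrix.single_mul_single_of_ne (h := Ne.symm hpq), mul_one, two_smul, smul_sub]
        abel
      have hgT : adFun X T = (2 : F) • S := by
        have z1 : Matrix.single p q (1 : F) * Matrix.single p p 1 = 0 :=
          Matrix.single_mul_single_of_ne _ _ _ _ (Ne.symm hpq) _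
        have z2 : Matrix.single q p (1 : F) * Matrix.single q q 1 = 0 :=
          Matrix.single_mul_single_of_ne _ _ _ _ hpq _
        have z3 : Matrix.single q q (1 : F) * Matrix.single p q 1 = 0 :=
          Matrix.single_mul_single_of_ne _ _ _ _ (Ne.symm hpq) _
        have z4 : Matrix.single p p (1 : F) * Matrix.single q p 1 = 0 :=
          Matrix.single_mul_single_of_ne _ _ _ _ hpq _
        rw [hX, hS, hT, hE1, hE2]
        simp only [adFun, mul_sub, sub_mul, add_mul, mul_add,
          Matrix.single_mul_single_same, z1, z2, z3, z4, mul_one, two_smul, smul_sub]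
        abel
      have halt : ∀ j : ℕ, (adFun X)^[j + 1] B =
          ((2 : F) ^ j * (b q - b p)) • (if Even j then S else T) := by
        intro j
        induction j with
        | zero => simpa using hgB
        | succ j ih =>
          rw [Function.iterate_succ_apply', ih, adFun_smul]
          by_cases hj : Even j
          · rw [if_pos hj, if_neg (by simp [Nat.even_add_one, hj]), hgS, smul_smul]
            congr 1; ring
          · rw [if_neg hj, if_pos (Nat.even_add_one.mpr hj), hgT, smul_smul]
            congr 1; ring
      have hfin : ((2 : F) ^ (m₂ + 1) * (b q - b p)) • (if Even (m₂ + 1) then S else T) = 0 := by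
        rw [← halt (m₂ + 1)]
        exact hXann
      have hc : (2 : F) ^ (m₂ + 1) * (b q - b p) = 0 := by
        by_cases hm : Even (m₂ + 1)
        · rw [if_pos hm] at hfin
          have := congrFun (congrFun hfin p) q
          simp only [Matrix.smul_apply, hS, Matrix.sub_apply, hE1, hE2,
            Matrix.single_apply_same, Matrix.zero_apply, smul_eq_mul] at this
          rw [Matrix.single_apply_of_ne q p 1 p q (by tauto)] at this
          simpa using this
        · rw [if_neg hm] at hfin
          have := congrFun (congrFun hfin q) q
          simp only [Matrix.smul_apply, hT, Matrix.sub_apply,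
            Matrix.single_apply_same, Matrix.zero_apply, smul_eq_mul] at this
          rw [Matrix.single_apply_of_ne p p 1 q q (by tauto)] at this
          simpa using this
      have h2ne : (2 : F) ^ (m₂ + 1) ≠ 0 := pow_ne_zero _ two_ne_zero
      have : b q - b p = 0 := by
        rcases mul_eq_zero.mp hc with h' | h'
        · exact absurd h' h2ne
        · exact h'
      exact (sub_eq_zero.mp this).symm
  -- Conclusion
  rcases Nat.eq_zero_or_pos n with hn | hn
  · subst hn
    exact ⟨0, by ext i; exact i.elim0⟩
  · refine ⟨b ⟨0, hn⟩, ?_⟩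
    ext i j
    by_cases hij : i = j
    · subst hij
      simp only [Matrix.smul_apply, Matrix.one_apply_eq, smul_eq_mul, mul_one]
      exact hbeq i ⟨0, hn⟩
    · simp [Matrix.one_apply_ne hij, hoff i j hij]
end

section
/- Let F be a field of characteristic zero and let A, B ∈ Mₙ(F). If A and B are polynomially equivalent, then for every positive integer k, Ker Ad_A^k = Ker Ad_B^k. -/
open Polynomial LinearMap Finset

/-- If `a` and `b` commute, then `f(a) - f(b)` factors as `(a - b) * c`
with `c` commuting with both `a` and `b`. -/
lemma aux_factor {F : Type*} [Field F] {R : Type*} [Ring R] [Algebra F R]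
    {a b : R} (hab : Commute a b) (f : Polynomial F) :
    ∃ c : R, aeval a f - aeval b f = (a - b) * c ∧ Commute a c ∧ Commute b c := by
  induction f using Polynomial.induction_on' with
  | add p q hp hq =>
      obtain ⟨cp, h1, h2, h3⟩ := hp
      obtain ⟨cq, h1', h2', h3'⟩ := hq
      refine ⟨cp + cq, ?_, h2.add_right h2', h3.add_right h3'⟩
      rw [map_add, map_add, mul_add, ← h1, ← h1']
      abel
  | monomial i r =>
      refine ⟨r • ∑ j ∈ range i, a ^ j * b ^ (i - 1 - j), ?_, ?_, ?_⟩
      · rw [mul_smul_comm, hab.mul_geom_sum₂, aeval_monomial, aeval_monomial,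
          ← Algebra.smul_def, ← Algebra.smul_def, ← smul_sub]
      · exact (Commute.sum_right _ _ _ fun j _ =>
          ((Commute.refl a).pow_right j).mul_right (hab.pow_right _)).smul_right r
      · exact (Commute.sum_right _ _ _ fun j _ =>
          (hab.symm.pow_right j).mul_right ((Commute.refl b).pow_right _)).smul_right r

lemma mulRight_aeval {F : Type*} [Field F] {R : Type*} [Ring R] [Algebra F R]
    (a : R) (f : Polynomial F) :
    LinearMap.mulRight F (aeval a f) = aeval (LinearMap.mulRight F a) f := by
  induction f using Polynomial.induction_on' with
  | add p q hp hq =>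
      rw [map_add, map_add, ← hp, ← hq]; ext x; simp [mul_add]
  | monomial i r =>
      ext x
      simp [aeval_monomial, ← Algebra.smul_def, pow_mulRight, mul_smul_comm]

lemma mulLeft_aeval {F : Type*} [Field F] {R : Type*} [Ring R] [Algebra F R]
    (a : R) (f : Polynomial F) :
    LinearMap.mulLeft F (aeval a f) = aeval (LinearMap.mulLeft F a) f := by
  induction f using Polynomial.induction_on' with
  | add p q hp hq =>
      rw [map_add, map_add, ← hp, ← hq]; ext x; simp [add_mul]
  | monomial i r =>
      ext x
      simp [aeval_monomial, ← Algebra.smul_def, pow_mulLeft, smul_mul_assoc]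

lemma kerAdPow_subset_aeval {n : ℕ} {F : Type*} [Field F]
    (A : Matrix (Fin n) (Fin n) F) (f : Polynomial F) (k : ℕ) :
    kerAdPow A k ⊆ kerAdPow (aeval A f) k := by
  set l := LinearMap.mulLeft F A
  set r := LinearMap.mulRight F A
  have hlr : Commute l r := commute_mulLeft_right A A
  obtain ⟨c, hfac, hac, hbc⟩ := aux_factor hlr f
  have hcomm : Commute (l - r) c := hac.sub_left hbc
  have h1 : adFun A = ⇑(l - r) := by
    funext Y; simp [adFun, l, r]
  have h2 : adFun (aeval A f) = ⇑((l - r) * c) := by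
    funext Y
    have hB : (l - r) * c = LinearMap.mulLeft F (aeval A f)
        - LinearMap.mulRight F (aeval A f) := by
      rw [mulLeft_aeval, mulRight_aeval, ← hfac]
    rw [hB]; simp [adFun]
  intro X hX
  simp only [kerAdPow, Set.mem_setOf_eq, h1, ← Module.End.coe_pow] at hX
  simp only [kerAdPow, Set.mem_setOf_eq, h2, ← Module.End.coe_pow]
  rw [hcomm.eq, hcomm.symm.mul_pow, Module.End.mul_apply, Module.End.pow_apply, hX]
  exact Function.iterate_fixed (map_zero c) k

theorem kerAdPow_eq_of_polyEquiv {n : ℕ} {F : Type*} [Field F] [CharZero F]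
    (A B : Matrix (Fin n) (Fin n) F) (h : PolyEquiv A B) :
    ∀ k : ℕ, 0 < k → kerAdPow A k = kerAdPow B k := by
  obtain ⟨f, g, hf, hg⟩ := h
  intro k _
  apply Set.Subset.antisymm
  · rw [hf]; exact kerAdPow_subset_aeval A f k
  · rw [hg]; exact kerAdPow_subset_aeval B g k
end

section
/- Let F be a field of characteristic zero and let B ∈ Mₙ(F). Then B is polynomially equivalent to Jₙ(0) if and only if there exist a₀, a₁, …, a_{n−1} ∈ F with a₁ ≠ 0 such that B = a₀Iₙ + a₁Jₙ(0) + a₂Jₙ(0)² + ⋯ + a_{n−1}Jₙ(0)^{n−1}. -/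
open Polynomial

lemma jordanBlock_pow_apply (n : ℕ) (F : Type*) [Field F] (k : ℕ) (i j : Fin n) :
    ((jordanBlock n F) ^ k) i j = if (i : ℕ) + k = (j : ℕ) then 1 else 0 := by
  induction k generalizing j with
  | zero => simp [Matrix.one_apply, Fin.val_inj, eq_comm]
  | succ k ih =>
    rw [pow_succ, Matrix.mul_apply]
    by_cases h : (i : ℕ) + k < n
    · have : ∀ l : Fin n, ((jordanBlock n F) ^ k) i l = if l = ⟨(i:ℕ)+k, h⟩ then 1 else 0 := by
        intro l; rw [ih]; congr 1
        simp [Fin.ext_iff, eq_comm]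
      simp only [this, ite_mul, one_mul, zero_mul, Finset.sum_ite_eq', Finset.mem_univ, if_true]
      simp [jordanBlock, ← add_assoc]
    · have hj : ¬ ((i : ℕ) + (k+1) = (j : ℕ)) := by omega
      rw [if_neg hj]
      apply Finset.sum_eq_zero
      intro l _
      rw [ih]
      have : ¬ ((i : ℕ) + k = (l : ℕ)) := by omega
      rw [if_neg this, zero_mul]

lemma jordanBlock_pow_eq_zero (n : ℕ) (F : Type*) [Field F] {k : ℕ} (hk : n ≤ k) :
    (jordanBlock n F) ^ k = 0 := by
  ext i j
  rw [jordanBlock_pow_apply]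
  have : ¬ ((i : ℕ) + k = (j : ℕ)) := by omega
  simp [this]

lemma aeval_jordanBlock {n : ℕ} {F : Type*} [Field F] (p : Polynomial F) :
    Polynomial.aeval (jordanBlock n F) p
      = ∑ i ∈ Finset.range n, p.coeff i • (jordanBlock n F) ^ i := by
  have hd : p.natDegree < max n (p.natDegree + 1) :=
    lt_of_lt_of_le (Nat.lt_succ_self _) (le_max_right _ _)
  rw [Polynomial.aeval_eq_sum_range' hd]
  refine (Finset.sum_subset (Finset.range_subset_range.2 (le_max_left _ _)) ?_).symm
  intro i hi hni
  simp only [Finset.mem_range] at hi hni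
  rw [jordanBlock_pow_eq_zero n F (by omega), smul_zero]

lemma coeff_extract {n : ℕ} {F : Type*} [Field F] (c : ℕ → F) {k : ℕ} (hk : k < n) :
    (∑ i ∈ Finset.range n, c i • (jordanBlock n F) ^ i) ⟨0, by omega⟩ ⟨k, hk⟩ = c k := by
  simp only [Matrix.sum_apply, Matrix.smul_apply, jordanBlock_pow_apply, smul_eq_mul,
    mul_ite, mul_one, mul_zero, Nat.zero_add]
  rw [Finset.sum_ite_eq' (Finset.range n) k c]
  simp [hk]

lemma comp_inverse_mod {F : Type*} [Field F] (p : F[X]) (hu : p.coeff 1 ≠ 0) (m : ℕ) :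
    ∃ g : F[X], (X : F[X]) ^ m ∣ g.comp p - X := by
  induction m with
  | zero => exact ⟨0, one_dvd _⟩
  | succ m ih =>
    obtain ⟨g, r, hr⟩ := ih
    set b := p.coeff 0 with hb
    have hX : (X : F[X]) ∣ p - C b := by
      rw [X_dvd_iff]; simp [hb]
    obtain ⟨q, hq⟩ := hX
    have hq0 : q.coeff 0 = p.coeff 1 := by
      have := congrArg (fun t => Polynomial.coeff t 1) hq
      simpa [coeff_X_mul] using this.symm
    set u := p.coeff 1 with hu'
    set c := r.coeff 0 with hc
    refine ⟨g - C (c * (u⁻¹) ^ m) * (X - C b) ^ m, ?_⟩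
    have hcomp : (g - C (c * (u⁻¹) ^ m) * (X - C b) ^ m).comp p
        = g.comp p - C (c * (u⁻¹) ^ m) * (p - C b) ^ m := by
      simp [sub_comp, mul_comp, pow_comp]
    rw [hcomp]
    have key : g.comp p - C (c * u⁻¹ ^ m) * (p - C b) ^ m - X
        = X ^ m * (r - C (c * u⁻¹ ^ m) * q ^ m) := by
      rw [hq, mul_pow]; linear_combination hr
    rw [key, pow_succ]
    apply mul_dvd_mul_left
    rw [X_dvd_iff]
    have hqm : (q ^ m).coeff 0 = u ^ m := by
      rw [Polynomial.coeff_zero_eq_eval_zero] at hq0 ⊢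
      rw [eval_pow, hq0]
    simp only [coeff_sub, coeff_C_mul, hqm, hc]
    field_simp
    rw [← mul_pow, one_div_mul_cancel hu, one_pow, sub_self, mul_zero]

theorem polyEquiv_jordan_iff {n : ℕ} {F : Type*} [Field F] [CharZero F]
    (B : Matrix (Fin n) (Fin n) F) :
    PolyEquiv (jordanBlock n F) B ↔
      ∃ a : ℕ → F, a 1 ≠ 0 ∧
        B = ∑ i ∈ Finset.range n, a i • (jordanBlock n F) ^ i := by
  constructor
  · rintro ⟨f, g, hf, hg⟩
    refine ⟨fun i => if n ≤ 1 ∧ i = 1 then 1 else f.coeff i, ?_, ?_⟩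
    · by_cases hn : n ≤ 1
      · simp [hn]
      · push_neg at hn
        have hn2 : 2 ≤ n := hn
        simp only [hn.not_ge, false_and, if_false]
        -- show f.coeff 1 ≠ 0
        intro hzero
        have hcomp : Polynomial.aeval (jordanBlock n F) (g.comp f) = jordanBlock n F := by
          rw [Polynomial.aeval_comp, ← hf, ← hg]
        have hX : Polynomial.aeval (jordanBlock n F) (X : F[X]) = jordanBlock n F :=
          Polynomial.aeval_X _
        rw [aeval_jordanBlock] at hcomp hX
        have h1 : (1 : ℕ) < n := by omega
        have hc1 : (g.comp f).coeff 1 = (X : F[X]).coeff 1 := by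
          have := congrArg (fun M => M ⟨0, by omega⟩ ⟨1, h1⟩) (hcomp.trans hX.symm)
          simpa [coeff_extract (fun i => (g.comp f).coeff i) h1,
            coeff_extract (fun i => (X : F[X]).coeff i) h1] using this
        have hd : (g.comp f).coeff 1
            = f.coeff 1 * ((Polynomial.derivative g).comp f).coeff 0 := by
          have h1' : (g.comp f).coeff 1
              = (Polynomial.derivative (g.comp f)).coeff 0 := by
            rw [Polynomial.coeff_derivative]; ring
          rw [h1', Polynomial.derivative_comp, Polynomial.mul_coeff_zero]
          congr 1
          rw [Polynomial.coeff_derivative]; ring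
        rw [hd, hzero, zero_mul] at hc1
        simp at hc1
    · rw [hf, aeval_jordanBlock]
      refine Finset.sum_congr rfl fun i hi => ?_
      simp only [Finset.mem_range] at hi
      have : ¬ (n ≤ 1 ∧ i = 1) := by omega
      simp [this]
  · rintro ⟨a, ha1, hB⟩
    set f : F[X] := ∑ i ∈ Finset.range n, C (a i) * X ^ i with hf
    have haf : Polynomial.aeval (jordanBlock n F) f = B := by
      rw [hB, hf, map_sum]
      refine Finset.sum_congr rfl fun i hi => ?_
      rw [map_mul, map_pow, Polynomial.aeval_C, Polynomial.aeval_X, Algebra.smul_def]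
    by_cases hn : n ≤ 1
    · refine ⟨f, 0, haf.symm, ?_⟩
      rw [map_zero]
      ext i j
      have hj : (j : ℕ) < n := j.2
      have : ¬ ((i : ℕ) + 1 = (j : ℕ)) := by omega
      simp [jordanBlock, this]
    · push_neg at hn
      have hcoeff : f.coeff 1 = a 1 := by
        rw [hf, Polynomial.finset_sum_coeff]
        have : ∀ i ∈ Finset.range n, (C (a i) * X ^ i).coeff 1
            = if 1 = i then a i else 0 := by
          intro i _
          rw [Polynomial.coeff_C_mul, Polynomial.coeff_X_pow]
          split <;> simp
        rw [Finset.sum_congr rfl this, Finset.sum_ite_eq]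
        simp [hn]
      obtain ⟨g, r, hr⟩ := comp_inverse_mod f (hcoeff ▸ ha1) n
      refine ⟨f, g, haf.symm, ?_⟩
      have : (g.comp f) = X + X ^ n * r := by linear_combination hr
      rw [← haf, ← Polynomial.aeval_comp, this, map_add, map_mul, map_pow,
        Polynomial.aeval_X, jordanBlock_pow_eq_zero n F le_rfl, zero_mul, add_zero]
end
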